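/- In the pair-HMM, suppose θ_0, θ ∈ Θ_0 both satisfy the marginal conditions h_X = f and h_Y = g. If f ≠ f_0, then D(θ|θ_0) = w(θ_0) − w(θ) ≥ −((1−p)/2)·Σ_x f_0(x) log(f(x)/f_0(x)) > 0, where p is the stationary probability of a vertical step under θ_0. Symmetrically for g ≠ g_0. -/

import Mathlib

open Finset Filter MeasureTheory
open scoped Classical

noncomputable section

/-- Hidden state space: 0 = horizontal step (1,0), 1 = vertical step (0,1), 2 = diagonal step (1,1). -/
abbrev E : Type := Fin 3

/-- The lattice step associated with each hidden state. -/
def stepv : E → ℕ × ℕ := ![(1,0), (0,1), (1,1)]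

/-- Number of X-letters emitted by the first `t` hidden steps. -/
def Nn (u : ℕ → E) (t : ℕ) : ℕ := ∑ i ∈ Finset.range t, (stepv (u i)).1

/-- Number of Y-letters emitted by the first `t` hidden steps. -/
def Mm (u : ℕ → E) (t : ℕ) : ℕ := ∑ i ∈ Finset.range t, (stepv (u i)).2

/-- Extend a finite hidden path to an infinite one (junk value 0 beyond `l`). -/
def extPath {l : ℕ} (u : Fin l → E) : ℕ → E := fun i => if h : i < l then u ⟨i, h⟩ else 0

/-- Conditional probability of the emitted letters for hidden steps `s, …, t-1`
(0-indexed) along path `u`, with observation streams `x` and `y` (0-indexed). -/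
def emit {A : Type} (f g : A → ℝ) (h : A → A → ℝ) (x y : ℕ → A) (u : ℕ → E) (s t : ℕ) : ℝ :=
  ∏ i ∈ Finset.Ico s t,
    if u i = 0 then f (x (Nn u i))
    else if u i = 1 then g (y (Mm u i))
    else h (x (Nn u i)) (y (Mm u i))

/-- Probability of a finite hidden path under initial law `mu` and transition matrix `pr`. -/
def pathProb (pr : E → E → ℝ) (mu : E → ℝ) {l : ℕ} (u : Fin l → E) : ℝ :=
  mu (extPath u 0) * ∏ i ∈ Finset.range (l - 1), pr (extPath u i) (extPath u (i + 1))

/-- `P_θ(ε_{1:t} ∈ E_{n,m} with |path| = t, X_{1:n} = x, Y_{1:m} = y)`: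
joint probability of a hidden path of length `t` ending at `(n,m)` together with
the emitted observations. -/
def jointProb {A : Type} (pr : E → E → ℝ) (mu : E → ℝ) (f g : A → ℝ) (h : A → A → ℝ)
    (x y : ℕ → A) (t n m : ℕ) : ℝ :=
  ∑ u : Fin t → E,
    if Nn (extPath u) t = n ∧ Mm (extPath u) t = m then
      pathProb pr mu u * emit f g h x y (extPath u) 0 t
    else 0

/-- `Q_θ(x_{1:n}, y_{1:m}) = Σ_{e ∈ E_{n,m}} P_θ(ε_{1:|e|} = e, x_{1:n}, y_{1:m})`:
all hidden paths ending at `(n,m)` have length ≤ n+m. -/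
def Qprob {A : Type} (pr : E → E → ℝ) (mu : E → ℝ) (f g : A → ℝ) (h : A → A → ℝ)
    (x y : ℕ → A) (n m : ℕ) : ℝ :=
  ∑ l ∈ Finset.range (n + m + 1), jointProb pr mu f g h x y l n m

/-- `P_θ(Z_t = (n,m))`. -/
def walkProb (pr : E → E → ℝ) (mu : E → ℝ) (t n m : ℕ) : ℝ :=
  ∑ u : Fin t → E,
    if Nn (extPath u) t = n ∧ Mm (extPath u) t = m then pathProb pr mu u else 0

/-- `P_θ(∃ s ≥ 1, Z_s = (n,m))` (the walk is strictly increasing in `n+m`, so the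
events for different path lengths are disjoint and the probability is a sum). -/
def hitProb (pr : E → E → ℝ) (mu : E → ℝ) (n m : ℕ) : ℝ :=
  ∑ l ∈ Finset.Icc 1 (n + m), walkProb pr mu l n m

end


/-! ### Auxiliary lemmas -/

noncomputable section AuxHMM

open Finset

lemma E_cases (e : E) : e = 0 ∨ e = 1 ∨ e = 2 := by fin_cases e <;> simp

lemma Nn_zero (u : ℕ → E) : Nn u 0 = 0 := Finset.sum_range_zero _

lemma Mm_zero (u : ℕ → E) : Mm u 0 = 0 := Finset.sum_range_zero _

lemma Nn_succ (u : ℕ → E) (l : ℕ) : Nn u (l+1) = Nn u l + (stepv (u l)).1 :=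
  Finset.sum_range_succ _ _

lemma Mm_succ (u : ℕ → E) (l : ℕ) : Mm u (l+1) = Mm u l + (stepv (u l)).2 :=
  Finset.sum_range_succ _ _

lemma Nn_congr {u v : ℕ → E} (l : ℕ) (h : ∀ i < l, u i = v i) : Nn u l = Nn v l :=
  Finset.sum_congr rfl fun i hi => by rw [h i (Finset.mem_range.1 hi)]

lemma Mm_congr {u v : ℕ → E} (l : ℕ) (h : ∀ i < l, u i = v i) : Mm u l = Mm v l :=
  Finset.sum_congr rfl fun i hi => by rw [h i (Finset.mem_range.1 hi)]

lemma Nn_mono (u : ℕ → E) {i j : ℕ} (h : i ≤ j) : Nn u i ≤ Nn u j :=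
  Finset.sum_le_sum_of_subset (Finset.range_subset_range.2 h)

lemma Mm_mono (u : ℕ → E) {i j : ℕ} (h : i ≤ j) : Mm u i ≤ Mm u j :=
  Finset.sum_le_sum_of_subset (Finset.range_subset_range.2 h)

lemma stepv_fst_le (e : E) : (stepv e).1 ≤ 1 := by fin_cases e <;> simp [stepv]

lemma stepv_snd_le (e : E) : (stepv e).2 ≤ 1 := by fin_cases e <;> simp [stepv]

lemma one_le_stepv (e : E) : 1 ≤ (stepv e).1 + (stepv e).2 := by fin_cases e <;> simp [stepv]

lemma Nn_le (u : ℕ → E) (l : ℕ) : Nn u l ≤ l := by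
  calc Nn u l ≤ ∑ _i ∈ Finset.range l, 1 := Finset.sum_le_sum fun i _ => stepv_fst_le _
  _ = l := by simp

lemma Mm_le (u : ℕ → E) (l : ℕ) : Mm u l ≤ l := by
  calc Mm u l ≤ ∑ _i ∈ Finset.range l, 1 := Finset.sum_le_sum fun i _ => stepv_snd_le _
  _ = l := by simp

lemma le_Nn_add_Mm (u : ℕ → E) (l : ℕ) : l ≤ Nn u l + Mm u l := by
  rw [Nn, Mm, ← Finset.sum_add_distrib]
  calc l = ∑ _i ∈ Finset.range l, 1 := by simp
  _ ≤ _ := Finset.sum_le_sum fun i _ => one_le_stepv _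

lemma Nn_add_Mm_strict (u : ℕ → E) {i j : ℕ} (h : i < j) :
    Nn u i + Mm u i < Nn u j + Mm u j := by
  have h1 : Nn u i + Mm u i < Nn u (i+1) + Mm u (i+1) := by
    rw [Nn_succ, Mm_succ]
    have := one_le_stepv (u i); omega
  have h2 : Nn u (i+1) ≤ Nn u j := Nn_mono u h
  have h3 : Mm u (i+1) ≤ Mm u j := Mm_mono u h
  omega

lemma stepv_fst_of_ne (e : E) (h : e ≠ 1) : (stepv e).1 = 1 := by
  rcases E_cases e with h0 | h1 | h2
  · rw [h0]; rfl
  · exact absurd h1 h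
  · rw [h2]; rfl

lemma stepv_snd_of_ne (e : E) (h : e ≠ 0) : (stepv e).2 = 1 := by
  rcases E_cases e with h0 | h1 | h2
  · exact absurd h0 h
  · rw [h1]; rfl
  · rw [h2]; rfl

lemma Nn_lt (u : ℕ → E) {i l : ℕ} (hil : i < l) (h : u i ≠ 1) : Nn u i < Nn u l := by
  have h1 : Nn u i < Nn u (i+1) := by
    rw [Nn_succ, stepv_fst_of_ne _ h]; omega
  exact lt_of_lt_of_le h1 (Nn_mono u hil)

lemma Mm_lt (u : ℕ → E) {i l : ℕ} (hil : i < l) (h : u i ≠ 0) : Mm u i < Mm u l := by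
  have h1 : Mm u i < Mm u (i+1) := by
    rw [Mm_succ, stepv_snd_of_ne _ h]; omega
  exact lt_of_lt_of_le h1 (Mm_mono u hil)

section WithA

variable {A : Type} [Fintype A] [Nonempty A]

lemma emit_zero (f g : A → ℝ) (h : A → A → ℝ) (x y : ℕ → A) (u : ℕ → E) :
    emit f g h x y u 0 0 = 1 := by simp [emit]

lemma emit_succ (f g : A → ℝ) (h : A → A → ℝ) (x y : ℕ → A) (u : ℕ → E) (l : ℕ) :
    emit f g h x y u 0 (l+1) = emit f g h x y u 0 l *
      (if u l = 0 then f (x (Nn u l)) else if u l = 1 then g (y (Mm u l))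
        else h (x (Nn u l)) (y (Mm u l))) :=
  Finset.prod_Ico_succ_top (Nat.zero_le _) _

lemma emit_pos {f g : A → ℝ} {h : A → A → ℝ} (hf : ∀ a, 0 < f a) (hg : ∀ a, 0 < g a)
    (hh : ∀ a b, 0 < h a b) (x y : ℕ → A) (u : ℕ → E) (l : ℕ) :
    0 < emit f g h x y u 0 l := by
  refine Finset.prod_pos fun i _ => ?_
  split_ifs <;> first | exact hf _ | exact hg _ | exact hh _ _

lemma emit_nonneg {f g : A → ℝ} {h : A → A → ℝ} (hf : ∀ a, 0 ≤ f a) (hg : ∀ a, 0 ≤ g a)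
    (hh : ∀ a b, 0 ≤ h a b) (x y : ℕ → A) (u : ℕ → E) (l : ℕ) :
    0 ≤ emit f g h x y u 0 l := by
  refine Finset.prod_nonneg fun i _ => ?_
  split_ifs <;> first | exact hf _ | exact hg _ | exact hh _ _

lemma emit_congr (f g : A → ℝ) (h : A → A → ℝ) {x x' y y' : ℕ → A} {u u' : ℕ → E} {l : ℕ}
    (hu : ∀ i < l, u i = u' i) (hx : ∀ j, j < Nn u l → x j = x' j)
    (hy : ∀ j, j < Mm u l → y j = y' j) :
    emit f g h x y u 0 l = emit f g h x' y' u' 0 l := by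
  unfold emit
  refine Finset.prod_congr rfl fun i hi => ?_
  have hil : i < l := (Finset.mem_Ico.1 hi).2
  have hNi : Nn u' i = Nn u i := Nn_congr i fun j hj => (hu j (hj.trans hil)).symm
  have hMi : Mm u' i = Mm u i := Mm_congr i fun j hj => (hu j (hj.trans hil)).symm
  rw [← hu i hil, hNi, hMi]
  split_ifs with hc1 hc2
  · rw [hx _ (Nn_lt u hil (by rw [hc1]; decide))]
  · rw [hy _ (Mm_lt u hil (by rw [hc2]; decide))]
  · rw [hx _ (Nn_lt u hil hc2), hy _ (Mm_lt u hil hc1)]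

/-- Extend a finite observation prefix to an infinite stream. -/
def extS {m : ℕ} (y : Fin m → A) : ℕ → A :=
  fun i => if h : i < m then y ⟨i, h⟩ else Classical.arbitrary A

lemma extS_lt {m : ℕ} (y : Fin m → A) {i : ℕ} (h : i < m) : extS y i = y ⟨i, h⟩ :=
  dif_pos h

lemma extS_snoc_lt {m : ℕ} (y : Fin m → A) (b : A) {i : ℕ} (h : i < m) :
    extS (Fin.snoc y b) i = extS y i := by
  rw [extS_lt _ (h.trans (Nat.lt_succ_self m)), extS_lt _ h]
  exact @Fin.snoc_castSucc m (fun _ => A) b y ⟨i, h⟩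

lemma extS_snoc_last {m : ℕ} (y : Fin m → A) (b : A) : extS (Fin.snoc y b) m = b := by
  rw [extS_lt _ (Nat.lt_succ_self m)]
  exact @Fin.snoc_last m (fun _ => A) b y

lemma sum_pi_snoc {β : Type} [Fintype β] {m : ℕ} (F : (Fin (m+1) → β) → ℝ) :
    ∑ y : Fin (m+1) → β, F y = ∑ y : Fin m → β, ∑ b : β, F (Fin.snoc y b) := by
  have e1 : ∑ y : Fin (m+1) → β, F y = ∑ p : β × (Fin m → β), F (Fin.snoc p.2 p.1) :=
    (Fintype.sum_equiv (Fin.snocEquiv (fun _ => β)) _ _ (fun p => by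
      simp [Fin.snocEquiv])).symm
  rw [e1, Fintype.sum_prod_type, Finset.sum_comm]


lemma stepv0 : stepv 0 = (1,0) := rfl
lemma stepv1 : stepv 1 = (0,1) := rfl
lemma stepv2 : stepv 2 = (1,1) := rfl

lemma sum_extS_emit (f g : A → ℝ) (h : A → A → ℝ) (hg1 : ∑ a, g a = 1)
    (hmX : ∀ a, ∑ b, h a b = f a) (x : ℕ → A) (u : ℕ → E) :
    ∀ (l : ℕ) {m : ℕ}, Mm u l = m →
      ∑ y : Fin m → A, emit f g h x (extS y) u 0 l
        = ∏ j ∈ Finset.range (Nn u l), f (x j) := by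
  intro l
  induction l with
  | zero =>
    intro m hm
    rw [Mm_zero] at hm; subst hm
    rw [Nn_zero]
    simp [emit_zero]
  | succ l ih =>
    intro m hm
    rw [Mm_succ] at hm
    rcases E_cases (u l) with h0 | h1 | h2
    · rw [h0, stepv0] at hm
      simp only [Nat.add_zero] at hm
      have key : ∀ y : Fin m → A, emit f g h x (extS y) u 0 (l+1)
          = emit f g h x (extS y) u 0 l * f (x (Nn u l)) := fun y => by
        rw [emit_succ, if_pos h0]
      rw [Finset.sum_congr rfl fun y _ => key y, ← Finset.sum_mul, ih hm,
        Nn_succ, h0, stepv0, Finset.prod_range_succ]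
    · rw [h1, stepv1] at hm
      subst hm
      rw [sum_pi_snoc]
      have key : ∀ (y : Fin (Mm u l) → A) (b : A),
          emit f g h x (extS (Fin.snoc y b)) u 0 (l+1)
            = emit f g h x (extS y) u 0 l * g b := by
        intro y b
        rw [emit_succ, h1, if_neg (show ¬((1:E) = 0) by decide),
          if_pos (rfl : (1:E) = 1), extS_snoc_last]
        congr 1
        exact emit_congr f g h (fun i _ => rfl) (fun j _ => rfl)
          (fun j hj => extS_snoc_lt y b hj)
      calc ∑ y : Fin (Mm u l) → A, ∑ b : A, emit f g h x (extS (Fin.snoc y b)) u 0 (l+1)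
          = ∑ y : Fin (Mm u l) → A, emit f g h x (extS y) u 0 l * ∑ b, g b := by
            refine Finset.sum_congr rfl fun y _ => ?_
            rw [Finset.mul_sum]
            exact Finset.sum_congr rfl fun b _ => key y b
        _ = ∏ j ∈ Finset.range (Nn u (l+1)), f (x j) := by
            rw [hg1]
            simp only [mul_one]
            rw [ih rfl, Nn_succ, h1, stepv1]
            norm_num
    · rw [h2, stepv2] at hm
      subst hm
      rw [sum_pi_snoc]
      have key : ∀ (y : Fin (Mm u l) → A) (b : A),
          emit f g h x (extS (Fin.snoc y b)) u 0 (l+1)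
            = emit f g h x (extS y) u 0 l * h (x (Nn u l)) b := by
        intro y b
        rw [emit_succ, h2, if_neg (show ¬((2:E) = 0) by decide),
          if_neg (show ¬((2:E) = 1) by decide), extS_snoc_last]
        congr 1
        exact emit_congr f g h (fun i _ => rfl) (fun j _ => rfl)
          (fun j hj => extS_snoc_lt y b hj)
      calc ∑ y : Fin (Mm u l) → A, ∑ b : A, emit f g h x (extS (Fin.snoc y b)) u 0 (l+1)
          = ∑ y : Fin (Mm u l) → A, emit f g h x (extS y) u 0 l * ∑ b, h (x (Nn u l)) b := by
            refine Finset.sum_congr rfl fun y _ => ?_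
            rw [Finset.mul_sum]
            exact Finset.sum_congr rfl fun b _ => key y b
        _ = ∏ j ∈ Finset.range (Nn u (l+1)), f (x j) := by
            rw [hmX, ← Finset.sum_mul, ih rfl, Nn_succ, h2, stepv2,
              Finset.prod_range_succ]

lemma sum_extS_prod (f : A → ℝ) (hf1 : ∑ a, f a = 1) :
    ∀ n : ℕ, ∑ x : Fin n → A, ∏ j ∈ Finset.range n, f (extS x j) = 1 := by
  intro n; induction n with
  | zero => simp
  | succ n ih =>
    rw [sum_pi_snoc]
    have key : ∀ (x : Fin n → A) (b : A),
        ∏ j ∈ Finset.range (n+1), f (extS (Fin.snoc x b) j)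
          = (∏ j ∈ Finset.range n, f (extS x j)) * f b := by
      intro x b
      rw [Finset.prod_range_succ, extS_snoc_last]
      congr 1
      exact Finset.prod_congr rfl fun j hj => by
        rw [extS_snoc_lt x b (Finset.mem_range.1 hj)]
    calc ∑ x : Fin n → A, ∑ b, ∏ j ∈ Finset.range (n+1), f (extS (Fin.snoc x b) j)
        = ∑ x : Fin n → A, (∏ j ∈ Finset.range n, f (extS x j)) * ∑ b, f b := by
          refine Finset.sum_congr rfl fun x _ => ?_
          rw [Finset.mul_sum]; exact Finset.sum_congr rfl fun b _ => key x b
      _ = 1 := by rw [hf1]; simpa using ih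

lemma sum_extS_klprod (f₀ f : A → ℝ) (hf₀1 : ∑ a, f₀ a = 1) :
    ∀ n : ℕ, ∑ x : Fin n → A, (∏ j ∈ Finset.range n, f₀ (extS x j)) *
        (∑ j ∈ Finset.range n, Real.log (f₀ (extS x j) / f (extS x j)))
      = n * ∑ a, f₀ a * Real.log (f₀ a / f a) := by
  intro n; induction n with
  | zero => simp
  | succ n ih =>
    rw [sum_pi_snoc]
    have key : ∀ (x : Fin n → A) (b : A),
        (∏ j ∈ Finset.range (n+1), f₀ (extS (Fin.snoc x b) j)) *
          (∑ j ∈ Finset.range (n+1),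
            Real.log (f₀ (extS (Fin.snoc x b) j) / f (extS (Fin.snoc x b) j)))
        = ((∏ j ∈ Finset.range n, f₀ (extS x j)) *
            (∑ j ∈ Finset.range n, Real.log (f₀ (extS x j) / f (extS x j)))) * f₀ b
          + (∏ j ∈ Finset.range n, f₀ (extS x j)) * (f₀ b * Real.log (f₀ b / f b)) := by
      intro x b
      have e1 : (∏ j ∈ Finset.range n, f₀ (extS (Fin.snoc x b) j))
          = ∏ j ∈ Finset.range n, f₀ (extS x j) :=
        Finset.prod_congr rfl fun j hj => by rw [extS_snoc_lt x b (Finset.mem_range.1 hj)]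
      have e2 : (∑ j ∈ Finset.range n,
            Real.log (f₀ (extS (Fin.snoc x b) j) / f (extS (Fin.snoc x b) j)))
          = ∑ j ∈ Finset.range n, Real.log (f₀ (extS x j) / f (extS x j)) :=
        Finset.sum_congr rfl fun j hj => by rw [extS_snoc_lt x b (Finset.mem_range.1 hj)]
      rw [Finset.prod_range_succ, Finset.sum_range_succ, extS_snoc_last, e1, e2]
      ring
    calc ∑ x : Fin n → A, ∑ b, (∏ j ∈ Finset.range (n+1), f₀ (extS (Fin.snoc x b) j)) *
          (∑ j ∈ Finset.range (n+1),
            Real.log (f₀ (extS (Fin.snoc x b) j) / f (extS (Fin.snoc x b) j)))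
        = ∑ x : Fin n → A,
            (((∏ j ∈ Finset.range n, f₀ (extS x j)) *
              (∑ j ∈ Finset.range n, Real.log (f₀ (extS x j) / f (extS x j)))) * (∑ b, f₀ b)
            + (∏ j ∈ Finset.range n, f₀ (extS x j)) * (∑ b, f₀ b * Real.log (f₀ b / f b))) := by
          refine Finset.sum_congr rfl fun x _ => ?_
          rw [Finset.sum_congr rfl fun b _ => key x b, Finset.sum_add_distrib,
            ← Finset.mul_sum, ← Finset.mul_sum]
      _ = ((n+1 : ℕ) : ℝ) * ∑ a, f₀ a * Real.log (f₀ a / f a) := by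
          rw [Finset.sum_add_distrib, hf₀1]
          simp only [mul_one]
          rw [← Finset.sum_mul, ih, sum_extS_prod f₀ hf₀1 n]
          push_cast; ring

lemma sum_extS_prefix (n : ℕ) (F : (ℕ → A) → ℝ)
    (hF : ∀ x x' : ℕ → A, (∀ i < n, x i = x' i) → F x = F x') :
    ∀ d : ℕ, ∑ x : Fin (n + d) → A, F (extS x)
      = (Fintype.card A : ℝ) ^ d * ∑ x : Fin n → A, F (extS x) := by
  intro d; induction d with
  | zero => simp
  | succ d ih =>
    show (∑ x : Fin ((n+d)+1) → A, F (extS x)) = _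
    rw [sum_pi_snoc]
    have key : ∀ (x : Fin (n+d) → A) (b : A), F (extS (Fin.snoc x b)) = F (extS x) :=
      fun x b => hF _ _ fun i hi => extS_snoc_lt x b (hi.trans_le (Nat.le_add_right n d))
    calc ∑ x : Fin (n+d) → A, ∑ b : A, F (extS (Fin.snoc x b))
        = ∑ x : Fin (n+d) → A, (Fintype.card A : ℝ) * F (extS x) := by
          refine Finset.sum_congr rfl fun x _ => ?_
          rw [Finset.sum_congr rfl fun b _ => key x b, Finset.sum_const, Finset.card_univ,
            nsmul_eq_mul]
      _ = (Fintype.card A : ℝ) ^ (d+1) * ∑ x : Fin n → A, F (extS x) := by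
          rw [← Finset.mul_sum, ih]; ring

lemma sum_extS_of_le {n t : ℕ} (hnt : n ≤ t) (F : (ℕ → A) → ℝ)
    (hF : ∀ x x' : ℕ → A, (∀ i < n, x i = x' i) → F x = F x') :
    ∑ x : Fin t → A, F (extS x)
      = (Fintype.card A : ℝ) ^ (t - n) * ∑ x : Fin n → A, F (extS x) := by
  obtain ⟨d, rfl⟩ := Nat.exists_eq_add_of_le hnt
  rw [Nat.add_sub_cancel_left]
  exact sum_extS_prefix n F hF d

end WithA



section PathLemmas

variable (pr : E → E → ℝ) (mu : E → ℝ)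

lemma extPath_lt {l : ℕ} (u : Fin l → E) {i : ℕ} (h : i < l) : extPath u i = u ⟨i, h⟩ :=
  dif_pos h

lemma extPath_snoc_lt {l : ℕ} (u : Fin l → E) (e : E) {i : ℕ} (h : i < l) :
    extPath (Fin.snoc u e) i = extPath u i := by
  rw [extPath_lt _ (h.trans (Nat.lt_succ_self l)), extPath_lt _ h]
  exact @Fin.snoc_castSucc l (fun _ => E) e u ⟨i, h⟩

lemma extPath_snoc_self {l : ℕ} (u : Fin l → E) (e : E) : extPath (Fin.snoc u e) l = e := by
  rw [extPath_lt _ (Nat.lt_succ_self l)]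
  exact @Fin.snoc_last l (fun _ => E) e u

lemma pathProb_nonneg (hpr : ∀ e e', 0 ≤ pr e e') (hmu : ∀ e, 0 ≤ mu e) {l : ℕ}
    (u : Fin l → E) : 0 ≤ pathProb pr mu u :=
  mul_nonneg (hmu _) (Finset.prod_nonneg fun _ _ => hpr _ _)

lemma pathProb_pos (hpr : ∀ e e', 0 < pr e e') (hmu : ∀ e, 0 < mu e) {l : ℕ}
    (u : Fin l → E) : 0 < pathProb pr mu u :=
  mul_pos (hmu _) (Finset.prod_pos fun _ _ => hpr _ _)

lemma pathProb_snoc {l : ℕ} (hl : 1 ≤ l) (u : Fin l → E) (e : E) :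
    pathProb pr mu (Fin.snoc u e) = pathProb pr mu u * pr (extPath u (l-1)) e := by
  obtain ⟨k, rfl⟩ : ∃ k, l = k + 1 := ⟨l - 1, (Nat.succ_pred_eq_of_pos hl).symm⟩
  unfold pathProb
  rw [show ((k+1)+1) - 1 = k+1 from rfl, show (k+1) - 1 = k from rfl,
    Finset.prod_range_succ]
  have eprod : ∏ i ∈ Finset.range k,
      pr (extPath (Fin.snoc u e) i) (extPath (Fin.snoc u e) (i+1))
      = ∏ i ∈ Finset.range k, pr (extPath u i) (extPath u (i+1)) := by
    refine Finset.prod_congr rfl fun i hi => ?_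
    have hik : i < k := Finset.mem_range.1 hi
    rw [extPath_snoc_lt u e (hik.trans (Nat.lt_succ_self k)),
      extPath_snoc_lt u e (Nat.succ_lt_succ hik)]
  rw [eprod, extPath_snoc_lt u e (Nat.succ_pos k),
    extPath_snoc_lt u e (Nat.lt_succ_self k), extPath_snoc_self u e]
  ring

lemma sum_pathProb_snoc (hpr1 : ∀ e, ∑ e', pr e e' = 1) {l : ℕ} (hl : 1 ≤ l)
    (u : Fin l → E) : ∑ e : E, pathProb pr mu (Fin.snoc u e) = pathProb pr mu u := by
  rw [Finset.sum_congr rfl fun e _ => pathProb_snoc pr mu hl u e, ← Finset.mul_sum,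
    hpr1, mul_one]

lemma pathProb_marg (hpr1 : ∀ e, ∑ e', pr e e' = 1) (l : ℕ) (hl : 1 ≤ l)
    (φ : (ℕ → E) → ℝ) (hφ : ∀ u v : ℕ → E, (∀ i < l, u i = v i) → φ u = φ v) :
    ∀ d : ℕ, ∑ u : Fin (l + d) → E, pathProb pr mu u * φ (extPath u)
      = ∑ u : Fin l → E, pathProb pr mu u * φ (extPath u) := by
  intro d; induction d with
  | zero => rfl
  | succ d ih =>
    show (∑ u : Fin ((l+d)+1) → E, pathProb pr mu u * φ (extPath u)) = _
    rw [sum_pi_snoc]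
    have key : ∀ (u : Fin (l+d) → E) (e : E), φ (extPath (Fin.snoc u e)) = φ (extPath u) :=
      fun u e => hφ _ _ fun i hi => extPath_snoc_lt u e (hi.trans_le (Nat.le_add_right l d))
    calc ∑ u : Fin (l+d) → E, ∑ e : E,
          pathProb pr mu (Fin.snoc u e) * φ (extPath (Fin.snoc u e))
        = ∑ u : Fin (l+d) → E, pathProb pr mu u * φ (extPath u) := by
          refine Finset.sum_congr rfl fun u _ => ?_
          rw [Finset.sum_congr rfl fun e _ => by rw [key u e], ← Finset.sum_mul,
            sum_pathProb_snoc pr mu hpr1 (hl.trans (Nat.le_add_right l d)) u]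
      _ = _ := ih

lemma pathProb_fin_one : ∀ u : Fin 1 → E, pathProb pr mu u = mu (u default) := by
  intro u; unfold pathProb
  rw [show (1:ℕ) - 1 = 0 from rfl, Finset.prod_range_zero, mul_one,
    extPath_lt u (by norm_num : (0:ℕ) < 1)]
  exact congrArg mu (congrArg u (Subsingleton.elim _ _))

lemma sum_pathProb_one (hpr1 : ∀ e, ∑ e', pr e e' = 1) (hmu1 : ∑ e, mu e = 1) {l : ℕ}
    (hl : 1 ≤ l) : ∑ u : Fin l → E, pathProb pr mu u = 1 := by
  obtain ⟨d, rfl⟩ := Nat.exists_eq_add_of_le hl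
  have h := pathProb_marg pr mu hpr1 1 le_rfl (fun _ => 1) (fun _ _ _ => rfl) d
  simp only [mul_one] at h
  rw [h, Fintype.sum_equiv (Equiv.funUnique (Fin 1) E) _ mu
    (fun u => pathProb_fin_one pr mu u), hmu1]

lemma occupancy (hpr1 : ∀ e, ∑ e', pr e e' = 1)
    (hstat : ∀ e', ∑ e, mu e * pr e e' = mu e') :
    ∀ (i : ℕ) (φ : E → ℝ), ∑ u : Fin (i+1) → E, pathProb pr mu u * φ (extPath u i)
       = ∑ e, mu e * φ e := by
  intro i; induction i with
  | zero =>
    intro φ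
    refine Fintype.sum_equiv (Equiv.funUnique (Fin 1) E) _ (fun e => mu e * φ e) fun u => ?_
    rw [pathProb_fin_one pr mu u, extPath_lt u (by norm_num : (0:ℕ) < 1)]
    rfl
  | succ i ih =>
    intro φ
    show (∑ u : Fin ((i+1)+1) → E, pathProb pr mu u * φ (extPath u (i+1))) = _
    rw [sum_pi_snoc]
    have key : ∀ (u : Fin (i+1) → E) (e : E),
        pathProb pr mu (Fin.snoc u e) * φ (extPath (Fin.snoc u e) (i+1))
          = pathProb pr mu u * (pr (extPath u i) e * φ e) := by
      intro u e
      rw [pathProb_snoc pr mu (by omega) u e, extPath_snoc_self,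
        show (i+1) - 1 = i from rfl]
      ring
    calc ∑ u : Fin (i+1) → E, ∑ e : E,
          pathProb pr mu (Fin.snoc u e) * φ (extPath (Fin.snoc u e) (i+1))
        = ∑ u : Fin (i+1) → E, pathProb pr mu u * ((fun e' => ∑ e, pr e' e * φ e) (extPath u i)) := by
          refine Finset.sum_congr rfl fun u _ => ?_
          rw [Finset.sum_congr rfl fun e _ => key u e, ← Finset.mul_sum]
      _ = ∑ e', mu e' * ∑ e, pr e' e * φ e := ih (fun e' => ∑ e, pr e' e * φ e)
      _ = ∑ e, mu e * φ e := by
          simp only [Finset.mul_sum]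
          rw [Finset.sum_comm]
          refine Finset.sum_congr rfl fun e _ => ?_
          calc ∑ e', mu e' * (pr e' e * φ e) = (∑ e', mu e' * pr e' e) * φ e := by
                rw [Finset.sum_mul]
                exact Finset.sum_congr rfl fun e' _ => (mul_assoc _ _ _).symm
            _ = mu e * φ e := by rw [hstat]

lemma occupancy' (hpr1 : ∀ e, ∑ e', pr e e' = 1)
    (hstat : ∀ e', ∑ e, mu e * pr e e' = mu e') {i l : ℕ} (hil : i < l) (φ : E → ℝ) :
    ∑ u : Fin l → E, pathProb pr mu u * φ (extPath u i) = ∑ e, mu e * φ e := by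
  obtain ⟨d, rfl⟩ := Nat.exists_eq_add_of_le (Nat.succ_le_of_lt hil)
  have h := pathProb_marg pr mu hpr1 (i+1) (by omega) (fun w => φ (w i))
    (fun u v hup => by rw [hup i (Nat.lt_succ_self i)]) d
  rw [h]
  exact occupancy pr mu hpr1 hstat i φ

lemma expected_Nn (hpr1 : ∀ e, ∑ e', pr e e' = 1)
    (hstat : ∀ e', ∑ e, mu e * pr e e' = mu e') (t : ℕ) :
    ∑ u : Fin t → E, pathProb pr mu u * (Nn (extPath u) t : ℝ)
      = t * (mu 0 + mu 2) := by
  have e1 : ∀ u : Fin t → E, (Nn (extPath u) t : ℝ)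
      = ∑ i ∈ Finset.range t, ((stepv (extPath u i)).1 : ℝ) := by
    intro u; rw [Nn]; push_cast; rfl
  calc ∑ u : Fin t → E, pathProb pr mu u * (Nn (extPath u) t : ℝ)
      = ∑ i ∈ Finset.range t, ∑ u : Fin t → E,
          pathProb pr mu u * ((stepv (extPath u i)).1 : ℝ) := by
        rw [Finset.sum_congr rfl fun u _ => by rw [e1 u, Finset.mul_sum]]
        exact Finset.sum_comm
    _ = ∑ _i ∈ Finset.range t, (mu 0 + mu 2) := by
        refine Finset.sum_congr rfl fun i hi => ?_
        rw [occupancy' pr mu hpr1 hstat (Finset.mem_range.1 hi) (fun e => ((stepv e).1 : ℝ))]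
        rw [Fin.sum_univ_three]
        simp [stepv0, stepv1, stepv2]
    _ = t * (mu 0 + mu 2) := by rw [Finset.sum_const, Finset.card_range, nsmul_eq_mul]

end PathLemmas


/-- Total mass of paths of any length `≤ n+m` ending at `(n,m)` (`walkProb 0` included). -/
def hq (pr : E → E → ℝ) (mu : E → ℝ) (n m : ℕ) : ℝ :=
  ∑ l ∈ Finset.range (n + m + 1), walkProb pr mu l n m

section QLemmas

variable {A : Type} [Fintype A] [Nonempty A]
variable (pr : E → E → ℝ) (mu : E → ℝ)

lemma walkProb_nonneg (hpr : ∀ e e', 0 ≤ pr e e') (hmu : ∀ e, 0 ≤ mu e) (l n m : ℕ) :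
    0 ≤ walkProb pr mu l n m := by
  refine Finset.sum_nonneg fun u _ => ?_
  split_ifs
  · exact pathProb_nonneg pr mu hpr hmu u
  · exact le_refl 0

lemma jointProb_nonneg (f g : A → ℝ) (h : A → A → ℝ) (hpr : ∀ e e', 0 ≤ pr e e')
    (hmu : ∀ e, 0 ≤ mu e) (hf : ∀ a, 0 ≤ f a) (hg : ∀ a, 0 ≤ g a) (hh : ∀ a b, 0 ≤ h a b)
    (x y : ℕ → A) (l n m : ℕ) : 0 ≤ jointProb pr mu f g h x y l n m := by
  refine Finset.sum_nonneg fun u _ => ?_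
  split_ifs
  · exact mul_nonneg (pathProb_nonneg pr mu hpr hmu u) (emit_nonneg hf hg hh _ _ _ _)
  · exact le_refl 0

lemma Qprob_nonneg (f g : A → ℝ) (h : A → A → ℝ) (hpr : ∀ e e', 0 ≤ pr e e')
    (hmu : ∀ e, 0 ≤ mu e) (hf : ∀ a, 0 ≤ f a) (hg : ∀ a, 0 ≤ g a) (hh : ∀ a b, 0 ≤ h a b)
    (x y : ℕ → A) (n m : ℕ) : 0 ≤ Qprob pr mu f g h x y n m :=
  Finset.sum_nonneg fun l _ => jointProb_nonneg pr mu f g h hpr hmu hf hg hh x y l n m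

lemma jointProb_pos (f g : A → ℝ) (h : A → A → ℝ) (hpr : ∀ e e', 0 < pr e e')
    (hmu : ∀ e, 0 < mu e) (hf : ∀ a, 0 < f a) (hg : ∀ a, 0 < g a) (hh : ∀ a b, 0 < h a b)
    (x y : ℕ → A) {t n m : ℕ} {u₀ : Fin t → E}
    (hu₀ : Nn (extPath u₀) t = n ∧ Mm (extPath u₀) t = m) :
    0 < jointProb pr mu f g h x y t n m := by
  have hterm : (0:ℝ) < (if Nn (extPath u₀) t = n ∧ Mm (extPath u₀) t = m then
      pathProb pr mu u₀ * emit f g h x y (extPath u₀) 0 t else 0) := by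
    rw [if_pos hu₀]
    exact mul_pos (pathProb_pos pr mu hpr hmu u₀) (emit_pos hf hg hh _ _ _ _)
  refine lt_of_lt_of_le hterm (Finset.single_le_sum (f := fun u : Fin t → E =>
    if Nn (extPath u) t = n ∧ Mm (extPath u) t = m then
      pathProb pr mu u * emit f g h x y (extPath u) 0 t else 0) (fun u _ => ?_)
    (Finset.mem_univ u₀))
  split_ifs
  · exact mul_nonneg (pathProb_nonneg pr mu (fun e e' => (hpr e e').le)
      (fun e => (hmu e).le) u) (emit_nonneg (fun a => (hf a).le) (fun a => (hg a).le)
      (fun a b => (hh a b).le) _ _ _ _)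
  · exact le_refl 0

lemma walkProb_pos (hpr : ∀ e e', 0 < pr e e') (hmu : ∀ e, 0 < mu e)
    {t n m : ℕ} {u₀ : Fin t → E}
    (hu₀ : Nn (extPath u₀) t = n ∧ Mm (extPath u₀) t = m) :
    0 < walkProb pr mu t n m := by
  have hterm : (0:ℝ) < (if Nn (extPath u₀) t = n ∧ Mm (extPath u₀) t = m then
      pathProb pr mu u₀ else 0) := by
    rw [if_pos hu₀]; exact pathProb_pos pr mu hpr hmu u₀
  refine lt_of_lt_of_le hterm (Finset.single_le_sum (f := fun u : Fin t → E =>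
    if Nn (extPath u) t = n ∧ Mm (extPath u) t = m then pathProb pr mu u else 0)
    (fun u _ => ?_) (Finset.mem_univ u₀))
  split_ifs
  · exact pathProb_nonneg pr mu (fun e e' => (hpr e e').le) (fun e => (hmu e).le) u
  · exact le_refl 0

lemma jointProb_le_Qprob (f g : A → ℝ) (h : A → A → ℝ) (hpr : ∀ e e', 0 ≤ pr e e')
    (hmu : ∀ e, 0 ≤ mu e) (hf : ∀ a, 0 ≤ f a) (hg : ∀ a, 0 ≤ g a) (hh : ∀ a b, 0 ≤ h a b)
    (x y : ℕ → A) {t n m : ℕ} (ht : t ≤ n + m) :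
    jointProb pr mu f g h x y t n m ≤ Qprob pr mu f g h x y n m :=
  Finset.single_le_sum (f := fun l => jointProb pr mu f g h x y l n m)
    (fun l _ => jointProb_nonneg pr mu f g h hpr hmu hf hg hh x y l n m)
    (Finset.mem_range.2 (Nat.lt_succ_of_le ht))

lemma walkProb_le_hq (hpr : ∀ e e', 0 ≤ pr e e') (hmu : ∀ e, 0 ≤ mu e)
    {t n m : ℕ} (ht : t ≤ n + m) : walkProb pr mu t n m ≤ hq pr mu n m :=
  Finset.single_le_sum (f := fun l => walkProb pr mu l n m)
    (fun l _ => walkProb_nonneg pr mu hpr hmu l n m)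
    (Finset.mem_range.2 (Nat.lt_succ_of_le ht))

lemma jointProb_congr (f g : A → ℝ) (h : A → A → ℝ) {x x' y y' : ℕ → A} (l n m : ℕ)
    (hx : ∀ j < n, x j = x' j) (hy : ∀ j < m, y j = y' j) :
    jointProb pr mu f g h x y l n m = jointProb pr mu f g h x' y' l n m := by
  refine Finset.sum_congr rfl fun u _ => ?_
  by_cases hc : Nn (extPath u) l = n ∧ Mm (extPath u) l = m
  · rw [if_pos hc, if_pos hc,
      emit_congr f g h (fun _ _ => rfl) (fun j hj => hx j (hc.1 ▸ hj))
        (fun j hj => hy j (hc.2 ▸ hj))]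
  · rw [if_neg hc, if_neg hc]

lemma Qprob_congr (f g : A → ℝ) (h : A → A → ℝ) {x x' y y' : ℕ → A} (n m : ℕ)
    (hx : ∀ j < n, x j = x' j) (hy : ∀ j < m, y j = y' j) :
    Qprob pr mu f g h x y n m = Qprob pr mu f g h x' y' n m :=
  Finset.sum_congr rfl fun l _ => jointProb_congr pr mu f g h l n m hx hy

lemma sum_y_jointProb (f g : A → ℝ) (h : A → A → ℝ) (hg1 : ∑ a, g a = 1)
    (hmX : ∀ a, ∑ b, h a b = f a) (x : ℕ → A) (l n m : ℕ) :
    ∑ y : Fin m → A, jointProb pr mu f g h x (extS y) l n m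
      = walkProb pr mu l n m * ∏ j ∈ Finset.range n, f (x j) := by
  unfold jointProb walkProb
  rw [Finset.sum_comm, Finset.sum_mul]
  refine Finset.sum_congr rfl fun u _ => ?_
  by_cases hc : Nn (extPath u) l = n ∧ Mm (extPath u) l = m
  · calc ∑ y : Fin m → A, (if Nn (extPath u) l = n ∧ Mm (extPath u) l = m then
          pathProb pr mu u * emit f g h x (extS y) (extPath u) 0 l else 0)
        = ∑ y : Fin m → A, pathProb pr mu u * emit f g h x (extS y) (extPath u) 0 l :=
          Finset.sum_congr rfl fun y _ => if_pos hc
      _ = pathProb pr mu u * ∏ j ∈ Finset.range (Nn (extPath u) l), f (x j) := by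
          rw [← Finset.mul_sum, sum_extS_emit f g h hg1 hmX x _ l hc.2]
      _ = (if Nn (extPath u) l = n ∧ Mm (extPath u) l = m then pathProb pr mu u else 0) *
            ∏ j ∈ Finset.range n, f (x j) := by rw [if_pos hc, hc.1]
  · calc ∑ y : Fin m → A, (if Nn (extPath u) l = n ∧ Mm (extPath u) l = m then
          pathProb pr mu u * emit f g h x (extS y) (extPath u) 0 l else 0)
        = 0 := by rw [Finset.sum_congr rfl fun y _ => if_neg hc]; simp
      _ = _ := by rw [if_neg hc, zero_mul]

lemma sum_y_Qprob (f g : A → ℝ) (h : A → A → ℝ) (hg1 : ∑ a, g a = 1)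
    (hmX : ∀ a, ∑ b, h a b = f a) (x : ℕ → A) (n m : ℕ) :
    ∑ y : Fin m → A, Qprob pr mu f g h x (extS y) n m
      = hq pr mu n m * ∏ j ∈ Finset.range n, f (x j) := by
  unfold Qprob hq
  rw [Finset.sum_comm, Finset.sum_mul]
  exact Finset.sum_congr rfl fun l _ => sum_y_jointProb pr mu f g h hg1 hmX x l n m

lemma walkProb_as_indicator (l n m : ℕ) :
    walkProb pr mu l n m = ∑ u : Fin l → E, pathProb pr mu u *
      (if Nn (extPath u) l = n ∧ Mm (extPath u) l = m then (1:ℝ) else 0) := by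
  refine Finset.sum_congr rfl fun u _ => ?_
  split_ifs
  · rw [mul_one]
  · rw [mul_zero]

lemma hq_le_one (hpr : ∀ e e', 0 < pr e e') (hmu : ∀ e, 0 < mu e)
    (hpr1 : ∀ e, ∑ e', pr e e' = 1) (hmu1 : ∑ e, mu e = 1) (n m : ℕ) (hnm : 1 ≤ n + m) :
    hq pr mu n m ≤ 1 := by
  set K := n + m with hK
  have hw0 : walkProb pr mu 0 n m = 0 := by
    refine Finset.sum_eq_zero fun u _ => if_neg ?_
    rw [Nn_zero, Mm_zero]
    omega
  have hmarg : ∀ i < K, walkProb pr mu (i+1) n m = ∑ u : Fin K → E, pathProb pr mu u *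
      (if Nn (extPath u) (i+1) = n ∧ Mm (extPath u) (i+1) = m then (1:ℝ) else 0) := by
    intro i hi
    rw [walkProb_as_indicator]
    obtain ⟨d, hd⟩ := Nat.exists_eq_add_of_le (Nat.succ_le_of_lt hi)
    rw [hd]
    exact (pathProb_marg pr mu hpr1 (i+1) (by omega)
      (fun w => if Nn w (i+1) = n ∧ Mm w (i+1) = m then (1:ℝ) else 0)
      (fun u v huv => by
        rw [Nn_congr (i+1) huv, Mm_congr (i+1) huv]) d).symm
  have step1 : hq pr mu n m = ∑ i ∈ Finset.range K, walkProb pr mu (i+1) n m := by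
    rw [hq, Finset.sum_range_succ', hw0, add_zero]
  rw [step1, Finset.sum_congr rfl fun i hi => hmarg i (Finset.mem_range.1 hi),
    Finset.sum_comm]
  have inner : ∀ u : Fin K → E, ∑ i ∈ Finset.range K, pathProb pr mu u *
      (if Nn (extPath u) (i+1) = n ∧ Mm (extPath u) (i+1) = m then (1:ℝ) else 0)
      ≤ pathProb pr mu u := by
    intro u
    rw [← Finset.mul_sum]
    have hple := pathProb_nonneg pr mu (fun e e' => (hpr e e').le) (fun e => (hmu e).le) u
    have hind : (∑ i ∈ Finset.range K, if Nn (extPath u) (i+1) = n ∧ Mm (extPath u) (i+1) = m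
        then (1:ℝ) else 0) ≤ 1 := by
      by_cases hex : ∃ i₀ ∈ Finset.range K, Nn (extPath u) (i₀+1) = n ∧ Mm (extPath u) (i₀+1) = m
      · obtain ⟨i₀, hi₀, hc₀⟩ := hex
        rw [Finset.sum_eq_single_of_mem i₀ hi₀ ?_]
        · rw [if_pos hc₀]
        intro i hi hne
        rw [if_neg]
        intro hc
        apply hne
        have h1 : Nn (extPath u) (i+1) + Mm (extPath u) (i+1)
            = Nn (extPath u) (i₀+1) + Mm (extPath u) (i₀+1) := by
          rw [hc.1, hc.2, hc₀.1, hc₀.2]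
        rcases lt_trichotomy i i₀ with hlt | heq | hgt
        · exact absurd h1 (ne_of_lt (Nn_add_Mm_strict (extPath u) (Nat.succ_lt_succ hlt)))
        · exact heq
        · exact absurd h1.symm (ne_of_lt (Nn_add_Mm_strict (extPath u) (Nat.succ_lt_succ hgt)))
      · rw [Finset.sum_eq_zero fun i hi => by
          rw [if_neg (fun hc => hex ⟨i, hi, hc⟩)]]
        norm_num
    calc pathProb pr mu u * (∑ i ∈ Finset.range K, if Nn (extPath u) (i+1) = n ∧
            Mm (extPath u) (i+1) = m then (1:ℝ) else 0)
        ≤ pathProb pr mu u * 1 := mul_le_mul_of_nonneg_left hind hple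
      _ = pathProb pr mu u := mul_one _
  calc ∑ u : Fin K → E, ∑ i ∈ Finset.range K, pathProb pr mu u *
        (if Nn (extPath u) (i+1) = n ∧ Mm (extPath u) (i+1) = m then (1:ℝ) else 0)
      ≤ ∑ u : Fin K → E, pathProb pr mu u := Finset.sum_le_sum fun u _ => inner u
    _ = 1 := sum_pathProb_one pr mu hpr1 hmu1 hnm

end QLemmas

section Analytic

lemma log_sum_ineq {ι : Type*} (s : Finset ι) (hs : s.Nonempty) (a b : ι → ℝ)
    (ha : ∀ i ∈ s, 0 < a i) (hb : ∀ i ∈ s, 0 < b i) :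
    (∑ i ∈ s, a i) * Real.log ((∑ i ∈ s, a i) / (∑ i ∈ s, b i))
      ≤ ∑ i ∈ s, a i * Real.log (a i / b i) := by
  set SA := ∑ i ∈ s, a i with hSA
  set SB := ∑ i ∈ s, b i with hSB
  have hSA0 : 0 < SA := Finset.sum_pos ha hs
  have hSB0 : 0 < SB := Finset.sum_pos hb hs
  have key : ∀ i ∈ s, a i * Real.log (SA/SB) - a i * Real.log (a i / b i)
      ≤ (SA/SB) * b i - a i := by
    intro i hi
    have hai := ha i hi; have hbi := hb i hi
    have h1 : Real.log ((b i * SA) / (a i * SB)) ≤ (b i * SA) / (a i * SB) - 1 :=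
      Real.log_le_sub_one_of_pos (by positivity)
    have h2 : Real.log ((b i * SA) / (a i * SB))
        = Real.log (SA/SB) - Real.log (a i / b i) := by
      rw [Real.log_div (by positivity) (by positivity),
        Real.log_mul (ne_of_gt hbi) (ne_of_gt hSA0),
        Real.log_mul (ne_of_gt hai) (ne_of_gt hSB0),
        Real.log_div (ne_of_gt hSA0) (ne_of_gt hSB0),
        Real.log_div (ne_of_gt hai) (ne_of_gt hbi)]
      ring
    rw [h2] at h1
    have h3 := mul_le_mul_of_nonneg_left h1 hai.le
    calc a i * Real.log (SA/SB) - a i * Real.log (a i/b i)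
        = a i * (Real.log (SA/SB) - Real.log (a i/b i)) := by ring
      _ ≤ a i * ((b i * SA)/(a i * SB) - 1) := h3
      _ = (SA/SB) * b i - a i := by field_simp
  have hsum := Finset.sum_le_sum key
  rw [Finset.sum_sub_distrib, ← Finset.sum_mul, Finset.sum_sub_distrib,
    ← Finset.mul_sum] at hsum
  rw [← hSA, ← hSB] at hsum
  have : SA / SB * SB = SA := div_mul_cancel₀ SA (ne_of_gt hSB0)
  linarith

lemma entropy_lower {ι : Type*} (s : Finset ι) (hs : s.Nonempty) (W : ι → ℝ)
    (hW : ∀ i ∈ s, 0 ≤ W i) (hsum : ∑ i ∈ s, W i = 1) :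
    -Real.log (s.card) ≤ ∑ i ∈ s, W i * Real.log (W i) := by
  have hN : (0:ℝ) < (s.card : ℝ) := by
    have := Finset.card_pos.2 hs
    positivity
  have key : ∀ i ∈ s, - (W i * Real.log (W i)) - W i * Real.log (s.card : ℝ)
      ≤ 1/(s.card : ℝ) - W i := by
    intro i hi
    rcases eq_or_lt_of_le (hW i hi) with h0 | h0
    · rw [← h0]
      have hpos : (0:ℝ) ≤ 1/(s.card:ℝ) := by positivity
      simpa using hpos
    · have h1 : Real.log (1/((s.card : ℝ) * W i)) ≤ 1/((s.card : ℝ) * W i) - 1 :=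
        Real.log_le_sub_one_of_pos (by positivity)
      have h2 : Real.log (1/((s.card : ℝ) * W i))
          = -(Real.log (s.card : ℝ)) - Real.log (W i) := by
        rw [Real.log_div one_ne_zero (by positivity), Real.log_one,
          Real.log_mul (ne_of_gt hN) (ne_of_gt h0)]
        ring
      rw [h2] at h1
      have h3 := mul_le_mul_of_nonneg_left h1 h0.le
      calc - (W i * Real.log (W i)) - W i * Real.log (s.card : ℝ)
          = W i * (-(Real.log (s.card : ℝ)) - Real.log (W i)) := by ring
        _ ≤ W i * (1/((s.card : ℝ) * W i) - 1) := h3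
        _ = 1/(s.card : ℝ) - W i := by field_simp
  have hsum2 := Finset.sum_le_sum key
  rw [Finset.sum_sub_distrib, Finset.sum_sub_distrib, ← Finset.sum_mul,
    hsum, Finset.sum_const, nsmul_eq_mul, mul_one_div, div_self (ne_of_gt hN)] at hsum2
  have e3 : ∑ i ∈ s, -(W i * Real.log (W i)) = -∑ i ∈ s, W i * Real.log (W i) :=
    Finset.sum_neg_distrib _
  rw [e3, one_mul] at hsum2
  linarith

lemma gibbs_strict {A : Type} [Fintype A] (f₀ f : A → ℝ) (hf₀ : ∀ a, 0 < f₀ a)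
    (hf : ∀ a, 0 < f a) (h1 : ∑ a, f₀ a = 1) (h2 : ∑ a, f a = 1) (hne : f ≠ f₀) :
    ∑ a, f₀ a * Real.log (f a / f₀ a) < 0 := by
  obtain ⟨a₀, ha₀⟩ : ∃ a, f a ≠ f₀ a := by
    by_contra hc; push_neg at hc; exact hne (funext hc)
  have key : ∀ a ∈ Finset.univ (α := A), f₀ a * Real.log (f a / f₀ a) ≤ f a - f₀ a := by
    intro a _
    have hl := Real.log_le_sub_one_of_pos (div_pos (hf a) (hf₀ a))
    have h3 := mul_le_mul_of_nonneg_left hl (hf₀ a).le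
    calc f₀ a * Real.log (f a / f₀ a) ≤ f₀ a * (f a / f₀ a - 1) := h3
      _ = f a - f₀ a := by field_simp [ne_of_gt (hf₀ a)]
  have strict : f₀ a₀ * Real.log (f a₀ / f₀ a₀) < f a₀ - f₀ a₀ := by
    have hne1 : f a₀ / f₀ a₀ ≠ 1 := by
      intro hc
      exact ha₀ ((div_eq_one_iff_eq (ne_of_gt (hf₀ a₀))).1 hc)
    have hl := Real.log_lt_sub_one_of_pos (div_pos (hf a₀) (hf₀ a₀)) hne1
    have h3 := mul_lt_mul_of_pos_left hl (hf₀ a₀)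
    calc f₀ a₀ * Real.log (f a₀ / f₀ a₀) < f₀ a₀ * (f a₀ / f₀ a₀ - 1) := h3
      _ = f a₀ - f₀ a₀ := by field_simp [ne_of_gt (hf₀ a₀)]
  have hlt := Finset.sum_lt_sum key ⟨a₀, Finset.mem_univ a₀, strict⟩
  calc ∑ a, f₀ a * Real.log (f a / f₀ a) < ∑ a, (f a - f₀ a) := hlt
    _ = 0 := by rw [Finset.sum_sub_distrib, h1, h2]; ring

end Analytic


section IntegralDecomp

open MeasureTheory

variable {A : Type} [Fintype A] [Nonempty A] [MeasurableSpace A] [MeasurableSingletonClass A]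

/-- The partition classes: a hidden path prefix together with the emitted observation
prefixes. -/
abbrev PClass (A : Type) (t : ℕ) :=
  (u : Fin t → E) × ((Fin (Nn (extPath u) t) → A) × (Fin (Mm (extPath u) t) → A))

/-- The cylinder event of a partition class. -/
def cSet (t : ℕ) (c : PClass A t) : Set ((ℕ → E) × (ℕ → A) × (ℕ → A)) :=
  {ω | (∀ i, ∀ hi : i < t, ω.1 i = c.1 ⟨i, hi⟩) ∧
       (∀ i < Nn (extPath c.1) t, ω.2.1 i = extS c.2.1 i) ∧
       (∀ j < Mm (extPath c.1) t, ω.2.2 j = extS c.2.2 j)}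

lemma cSet_measurable (t : ℕ) (c : PClass A t) : MeasurableSet (cSet t c) := by
  unfold cSet
  simp only [Set.setOf_and]
  refine MeasurableSet.inter ?_ (MeasurableSet.inter ?_ ?_)
  · rw [Set.setOf_forall]
    refine MeasurableSet.iInter fun i => ?_
    rw [Set.setOf_forall]
    refine MeasurableSet.iInter fun hi => ?_
    exact ((measurable_pi_apply i).comp measurable_fst) (measurableSet_singleton _)
  · rw [Set.setOf_forall]
    refine MeasurableSet.iInter fun i => ?_
    rw [Set.setOf_forall]
    refine MeasurableSet.iInter fun hi => ?_
    exact ((measurable_pi_apply i).comp (measurable_fst.comp measurable_snd))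
      (measurableSet_singleton _)
  · rw [Set.setOf_forall]
    refine MeasurableSet.iInter fun j => ?_
    rw [Set.setOf_forall]
    refine MeasurableSet.iInter fun hj => ?_
    exact ((measurable_pi_apply j).comp (measurable_snd.comp measurable_snd))
      (measurableSet_singleton _)

lemma integral_log_Q (ℙ : Measure ((ℕ → E) × (ℕ → A) × (ℕ → A))) [IsProbabilityMeasure ℙ]
    (pr' : E → E → ℝ) (mu' : E → ℝ) (f' g' : A → ℝ) (h' : A → A → ℝ) (t : ℕ) :
    ∫ ω, Real.log (Qprob pr' mu' f' g' h' ω.2.1 ω.2.2 (Nn ω.1 t) (Mm ω.1 t)) ∂ℙ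
      = ∑ c : PClass A t, (ℙ (cSet t c)).toReal *
          Real.log (Qprob pr' mu' f' g' h' (extS c.2.1) (extS c.2.2)
            (Nn (extPath c.1) t) (Mm (extPath c.1) t)) := by
  set val := fun c : PClass A t => Real.log (Qprob pr' mu' f' g' h' (extS c.2.1) (extS c.2.2)
      (Nn (extPath c.1) t) (Mm (extPath c.1) t)) with hval
  have hdecomp : (fun ω : (ℕ → E) × (ℕ → A) × (ℕ → A) =>
      Real.log (Qprob pr' mu' f' g' h' ω.2.1 ω.2.2 (Nn ω.1 t) (Mm ω.1 t)))
      = fun ω => ∑ c : PClass A t, (cSet t c).indicator (fun _ => val c) ω := by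
    funext ω
    set u₀ : Fin t → E := fun i => ω.1 i with hu₀
    set c₀ : PClass A t := ⟨u₀, (fun j => ω.2.1 j, fun j => ω.2.2 j)⟩ with hc₀
    have hmem : ω ∈ cSet t c₀ := by
      refine ⟨fun i hi => rfl, fun i hi => ?_, fun j hj => ?_⟩
      · rw [extS_lt c₀.2.1 hi]
      · rw [extS_lt c₀.2.2 hj]
    have huniq : ∀ c : PClass A t, ω ∈ cSet t c → c = c₀ := by
      rintro ⟨u, xx, yy⟩ ⟨hu, hx, hy⟩
      have hueq : u = u₀ := by
        funext i
        exact ((hu i.1 i.2).trans (congrArg u (Fin.eta i i.2))).symm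
      subst hueq
      have hxeq : xx = (fun j : Fin (Nn (extPath u₀) t) => ω.2.1 j.1) := by
        funext j
        have h1 := hx j.1 j.2
        rw [extS_lt xx j.2] at h1
        exact ((h1.trans (congrArg xx (Fin.eta j j.2)))).symm
      have hyeq : yy = (fun j : Fin (Mm (extPath u₀) t) => ω.2.2 j.1) := by
        funext j
        have h1 := hy j.1 j.2
        rw [extS_lt yy j.2] at h1
        exact ((h1.trans (congrArg yy (Fin.eta j j.2)))).symm
      rw [hc₀]
      exact congrArg (Sigma.mk u₀) (by rw [hxeq, hyeq])
    rw [Finset.sum_eq_single c₀ (fun c _ hne => Set.indicator_of_notMem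
      (fun hmem' => hne (huniq c hmem')) _)
      (fun hno => absurd (Finset.mem_univ c₀) hno)]
    rw [Set.indicator_of_mem hmem]
    have hN : Nn ω.1 t = Nn (extPath u₀) t :=
      Nn_congr t fun i hi => by rw [extPath_lt u₀ hi]
    have hM : Mm ω.1 t = Mm (extPath u₀) t :=
      Mm_congr t fun i hi => by rw [extPath_lt u₀ hi]
    rw [hN, hM]
    refine congrArg Real.log (Qprob_congr pr' mu' f' g' h' _ _ ?_ ?_)
    · intro j hj
      rw [extS_lt c₀.2.1 hj]
    · intro j hj
      rw [extS_lt c₀.2.2 hj]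
  rw [hdecomp, MeasureTheory.integral_finset_sum Finset.univ
    (fun c _ => (integrable_const (val c)).indicator (cSet_measurable t c))]
  refine Finset.sum_congr rfl fun c _ => ?_
  rw [MeasureTheory.integral_indicator_const (val c) (cSet_measurable t c), smul_eq_mul, MeasureTheory.measureReal_def,
    mul_comm]

end IntegralDecomp


section CoreBound

variable {A : Type} [Fintype A] [Nonempty A]

lemma jointProb_key (pr : E → E → ℝ) (mu : E → ℝ) (f g : A → ℝ) (h : A → A → ℝ)
    (x y : ℕ → A) (t : ℕ) (k : ℕ × ℕ) :
    (∑ u : Fin t → E, if (Nn (extPath u) t, Mm (extPath u) t) = k then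
        pathProb pr mu u * emit f g h x y (extPath u) 0 t else 0)
      = jointProb pr mu f g h x y t k.1 k.2 :=
  Finset.sum_congr rfl fun u _ => if_congr (by simp [Prod.ext_iff]) rfl rfl

lemma walkProb_key (pr : E → E → ℝ) (mu : E → ℝ) (t : ℕ) (k : ℕ × ℕ) :
    (∑ u : Fin t → E, if (Nn (extPath u) t, Mm (extPath u) t) = k then
        pathProb pr mu u else 0)
      = walkProb pr mu t k.1 k.2 :=
  Finset.sum_congr rfl fun u _ => if_congr (by simp [Prod.ext_iff]) rfl rfl

lemma sum_key_collapse (t : ℕ) (F : (Fin t → E) → (ℕ × ℕ) → ℝ) :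
    ∑ k ∈ Finset.range (t+1) ×ˢ Finset.range (t+1), ∑ u : Fin t → E,
      (if (Nn (extPath u) t, Mm (extPath u) t) = k then F u k else 0)
    = ∑ u : Fin t → E, F u (Nn (extPath u) t, Mm (extPath u) t) := by
  rw [Finset.sum_comm]
  refine Finset.sum_congr rfl fun u _ => ?_
  rw [Finset.sum_ite_eq (Finset.range (t+1) ×ˢ Finset.range (t+1))
    (Nn (extPath u) t, Mm (extPath u) t) (F u)]
  rw [if_pos (Finset.mem_product.2 ⟨Finset.mem_range.2 (Nat.lt_succ_of_le (Nn_le _ _)),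
    Finset.mem_range.2 (Nat.lt_succ_of_le (Mm_le _ _))⟩)]

lemma fiber_bound
    (pr₀ : E → E → ℝ) (mu₀ : E → ℝ) (f₀ g₀ : A → ℝ) (h₀ : A → A → ℝ)
    (hpr₀ : ∀ e e', 0 < pr₀ e e') (hmu₀ : ∀ e, 0 < mu₀ e)
    (hf₀ : ∀ a, 0 < f₀ a) (hg₀ : ∀ a, 0 < g₀ a) (hh₀ : ∀ a b, 0 < h₀ a b)
    (hg₀sum : ∑ a, g₀ a = 1) (hf₀sum : ∑ a, f₀ a = 1)
    (hmarg₀X : ∀ a, ∑ b, h₀ a b = f₀ a)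
    (pr : E → E → ℝ) (mu : E → ℝ) (f g : A → ℝ) (h : A → A → ℝ)
    (hpr : ∀ e e', 0 < pr e e') (hmu : ∀ e, 0 < mu e)
    (hf : ∀ a, 0 < f a) (hg : ∀ a, 0 < g a) (hh : ∀ a b, 0 < h a b)
    (hprsum : ∀ e, ∑ e', pr e e' = 1) (hmusum : ∑ e, mu e = 1)
    (hgsum : ∑ a, g a = 1) (hmargX : ∀ a, ∑ b, h a b = f a)
    (t : ℕ) (ht : 1 ≤ t) (k : ℕ × ℕ) (hk1 : k.1 ≤ t) (hk2 : k.2 ≤ t) :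
    walkProb pr₀ mu₀ t k.1 k.2 * Real.log (walkProb pr₀ mu₀ t k.1 k.2)
      + (k.1:ℝ) * walkProb pr₀ mu₀ t k.1 k.2 * (∑ a, f₀ a * Real.log (f₀ a / f a))
    ≤ ((Fintype.card A : ℝ)^(t-k.1) * (Fintype.card A : ℝ)^(t-k.2))⁻¹ *
      ∑ x : Fin t → A, ∑ y : Fin t → A,
        jointProb pr₀ mu₀ f₀ g₀ h₀ (extS x) (extS y) t k.1 k.2 *
          (Real.log (Qprob pr₀ mu₀ f₀ g₀ h₀ (extS x) (extS y) k.1 k.2)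
            - Real.log (Qprob pr mu f g h (extS x) (extS y) k.1 k.2)) := by
  by_cases hfib : ∃ u₀ : Fin t → E, Nn (extPath u₀) t = k.1 ∧ Mm (extPath u₀) t = k.2
  case neg =>
    have hw : walkProb pr₀ mu₀ t k.1 k.2 = 0 :=
      Finset.sum_eq_zero fun u _ => if_neg (fun hc => hfib ⟨u, hc⟩)
    have hj : ∀ x y : Fin t → A,
        jointProb pr₀ mu₀ f₀ g₀ h₀ (extS x) (extS y) t k.1 k.2 = 0 :=
      fun x y => Finset.sum_eq_zero fun u _ => if_neg (fun hc => hfib ⟨u, hc⟩)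
    rw [hw]
    simp [hj]
  case pos =>
  obtain ⟨u₀, hu₀⟩ := hfib
  have hcApos : (0:ℝ) < (Fintype.card A : ℝ) := by exact_mod_cast Fintype.card_pos
  have ht_le : t ≤ k.1 + k.2 := by
    have h1 := le_Nn_add_Mm (extPath u₀) t
    rw [hu₀.1, hu₀.2] at h1
    exact h1
  have hWpos : 0 < walkProb pr₀ mu₀ t k.1 k.2 := walkProb_pos pr₀ mu₀ hpr₀ hmu₀ hu₀
  have hHQpos : 0 < hq pr mu k.1 k.2 :=
    lt_of_lt_of_le (walkProb_pos pr mu hpr hmu hu₀)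
      (walkProb_le_hq pr mu (fun e e' => (hpr e e').le) (fun e => (hmu e).le) ht_le)
  have hHQ1 : hq pr mu k.1 k.2 ≤ 1 :=
    hq_le_one pr mu hpr hmu hprsum hmusum k.1 k.2 (ht.trans ht_le)
  have hJpos : ∀ x y : Fin t → A,
      0 < jointProb pr₀ mu₀ f₀ g₀ h₀ (extS x) (extS y) t k.1 k.2 := fun x y =>
    jointProb_pos pr₀ mu₀ f₀ g₀ h₀ hpr₀ hmu₀ hf₀ hg₀ hh₀ _ _ hu₀
  have hQpos : ∀ x y : Fin t → A,
      0 < Qprob pr mu f g h (extS x) (extS y) k.1 k.2 := fun x y =>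
    lt_of_lt_of_le (jointProb_pos pr mu f g h hpr hmu hf hg hh _ _ hu₀)
      (jointProb_le_Qprob pr mu f g h (fun e e' => (hpr e e').le) (fun e => (hmu e).le)
        (fun a => (hf a).le) (fun a => (hg a).le) (fun a b => (hh a b).le) _ _ ht_le)
  have hQ0ge : ∀ x y : Fin t → A,
      jointProb pr₀ mu₀ f₀ g₀ h₀ (extS x) (extS y) t k.1 k.2
        ≤ Qprob pr₀ mu₀ f₀ g₀ h₀ (extS x) (extS y) k.1 k.2 := fun x y =>
    jointProb_le_Qprob pr₀ mu₀ f₀ g₀ h₀ (fun e e' => (hpr₀ e e').le) (fun e => (hmu₀ e).le)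
      (fun a => (hf₀ a).le) (fun a => (hg₀ a).le) (fun a b => (hh₀ a b).le) _ _ ht_le
  have hP0pos : ∀ x : Fin t → A, 0 < ∏ j ∈ Finset.range k.1, f₀ (extS x j) :=
    fun x => Finset.prod_pos fun j _ => hf₀ _
  have hPfpos : ∀ x : Fin t → A, 0 < ∏ j ∈ Finset.range k.1, f (extS x j) :=
    fun x => Finset.prod_pos fun j _ => hf _
  -- y-marginals
  have hSJ : ∀ x : Fin t → A, ∑ y : Fin t → A,
      jointProb pr₀ mu₀ f₀ g₀ h₀ (extS x) (extS y) t k.1 k.2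
      = (Fintype.card A : ℝ)^(t-k.2) * (walkProb pr₀ mu₀ t k.1 k.2 *
          ∏ j ∈ Finset.range k.1, f₀ (extS x j)) := by
    intro x
    calc ∑ y : Fin t → A, jointProb pr₀ mu₀ f₀ g₀ h₀ (extS x) (extS y) t k.1 k.2
        = (Fintype.card A : ℝ)^(t-k.2) * ∑ y : Fin k.2 → A,
            jointProb pr₀ mu₀ f₀ g₀ h₀ (extS x) (extS y) t k.1 k.2 :=
          sum_extS_of_le hk2
            (fun Y => jointProb pr₀ mu₀ f₀ g₀ h₀ (extS x) Y t k.1 k.2)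
            (fun Y Y' hYY =>
              jointProb_congr pr₀ mu₀ f₀ g₀ h₀ t k.1 k.2 (fun j _ => rfl) hYY)
      _ = _ := by
          rw [sum_y_jointProb pr₀ mu₀ f₀ g₀ h₀ hg₀sum hmarg₀X (extS x) t k.1 k.2]
  have hSQ : ∀ x : Fin t → A, ∑ y : Fin t → A,
      Qprob pr mu f g h (extS x) (extS y) k.1 k.2
      = (Fintype.card A : ℝ)^(t-k.2) * (hq pr mu k.1 k.2 *
          ∏ j ∈ Finset.range k.1, f (extS x j)) := by
    intro x
    calc ∑ y : Fin t → A, Qprob pr mu f g h (extS x) (extS y) k.1 k.2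
        = (Fintype.card A : ℝ)^(t-k.2) * ∑ y : Fin k.2 → A,
            Qprob pr mu f g h (extS x) (extS y) k.1 k.2 :=
          sum_extS_of_le hk2
            (fun Y => Qprob pr mu f g h (extS x) Y k.1 k.2)
            (fun Y Y' hYY =>
              Qprob_congr pr mu f g h k.1 k.2 (fun j _ => rfl) hYY)
      _ = _ := by
          rw [sum_y_Qprob pr mu f g h hgsum hmargX (extS x) k.1 k.2]
  -- per-x bound
  have step_y : ∀ x : Fin t → A,
      (Fintype.card A : ℝ)^(t-k.2) * (walkProb pr₀ mu₀ t k.1 k.2 *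
        ∏ j ∈ Finset.range k.1, f₀ (extS x j)) *
        (Real.log (walkProb pr₀ mu₀ t k.1 k.2) +
          ∑ j ∈ Finset.range k.1, Real.log (f₀ (extS x j) / f (extS x j)))
      ≤ ∑ y : Fin t → A, jointProb pr₀ mu₀ f₀ g₀ h₀ (extS x) (extS y) t k.1 k.2 *
          (Real.log (Qprob pr₀ mu₀ f₀ g₀ h₀ (extS x) (extS y) k.1 k.2)
            - Real.log (Qprob pr mu f g h (extS x) (extS y) k.1 k.2)) := by
    intro x
    have B1 := log_sum_ineq Finset.univ Finset.univ_nonempty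
      (fun y : Fin t → A => jointProb pr₀ mu₀ f₀ g₀ h₀ (extS x) (extS y) t k.1 k.2)
      (fun y : Fin t → A => Qprob pr mu f g h (extS x) (extS y) k.1 k.2)
      (fun y _ => hJpos x y) (fun y _ => hQpos x y)
    have B2 : ∑ y : Fin t → A, jointProb pr₀ mu₀ f₀ g₀ h₀ (extS x) (extS y) t k.1 k.2 *
        Real.log (jointProb pr₀ mu₀ f₀ g₀ h₀ (extS x) (extS y) t k.1 k.2 /
          Qprob pr mu f g h (extS x) (extS y) k.1 k.2)
        ≤ ∑ y : Fin t → A, jointProb pr₀ mu₀ f₀ g₀ h₀ (extS x) (extS y) t k.1 k.2 *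
          (Real.log (Qprob pr₀ mu₀ f₀ g₀ h₀ (extS x) (extS y) k.1 k.2)
            - Real.log (Qprob pr mu f g h (extS x) (extS y) k.1 k.2)) := by
      refine Finset.sum_le_sum fun y _ => ?_
      refine mul_le_mul_of_nonneg_left ?_ (hJpos x y).le
      rw [Real.log_div (hJpos x y).ne' (hQpos x y).ne']
      exact sub_le_sub_right (Real.log_le_log (hJpos x y) (hQ0ge x y)) _
    have B4 : Real.log (walkProb pr₀ mu₀ t k.1 k.2) +
        ∑ j ∈ Finset.range k.1, Real.log (f₀ (extS x j) / f (extS x j))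
        ≤ Real.log ((walkProb pr₀ mu₀ t k.1 k.2 * ∏ j ∈ Finset.range k.1, f₀ (extS x j)) /
            (hq pr mu k.1 k.2 * ∏ j ∈ Finset.range k.1, f (extS x j))) := by
      have e1 : Real.log ((walkProb pr₀ mu₀ t k.1 k.2 * ∏ j ∈ Finset.range k.1, f₀ (extS x j)) /
            (hq pr mu k.1 k.2 * ∏ j ∈ Finset.range k.1, f (extS x j)))
          = Real.log (walkProb pr₀ mu₀ t k.1 k.2) +
            (∑ j ∈ Finset.range k.1, Real.log (f₀ (extS x j)))
            - Real.log (hq pr mu k.1 k.2)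
            - ∑ j ∈ Finset.range k.1, Real.log (f (extS x j)) := by
        rw [Real.log_div (mul_pos hWpos (hP0pos x)).ne' (mul_pos hHQpos (hPfpos x)).ne',
          Real.log_mul hWpos.ne' (hP0pos x).ne', Real.log_mul hHQpos.ne' (hPfpos x).ne',
          Real.log_prod (fun j _ => (hf₀ _).ne'), Real.log_prod (fun j _ => (hf _).ne')]
        ring
      have e2 : ∑ j ∈ Finset.range k.1, Real.log (f₀ (extS x j) / f (extS x j))
          = (∑ j ∈ Finset.range k.1, Real.log (f₀ (extS x j)))
            - ∑ j ∈ Finset.range k.1, Real.log (f (extS x j)) := by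
        rw [← Finset.sum_sub_distrib]
        exact Finset.sum_congr rfl fun j _ => Real.log_div (hf₀ _).ne' (hf _).ne'
      have e3 : Real.log (hq pr mu k.1 k.2) ≤ 0 := Real.log_nonpos hHQpos.le hHQ1
      rw [e1, e2]
      linarith
    have B5 : (Fintype.card A : ℝ)^(t-k.2) * (walkProb pr₀ mu₀ t k.1 k.2 *
          ∏ j ∈ Finset.range k.1, f₀ (extS x j)) *
        (Real.log (walkProb pr₀ mu₀ t k.1 k.2) +
          ∑ j ∈ Finset.range k.1, Real.log (f₀ (extS x j) / f (extS x j)))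
        ≤ (∑ y : Fin t → A, jointProb pr₀ mu₀ f₀ g₀ h₀ (extS x) (extS y) t k.1 k.2) *
          Real.log ((∑ y : Fin t → A, jointProb pr₀ mu₀ f₀ g₀ h₀ (extS x) (extS y) t k.1 k.2) /
            (∑ y : Fin t → A, Qprob pr mu f g h (extS x) (extS y) k.1 k.2)) := by
      rw [hSJ x, hSQ x, mul_div_mul_left _ _ (pow_pos hcApos (t-k.2)).ne']
      exact mul_le_mul_of_nonneg_left B4
        (mul_nonneg (by positivity) (mul_nonneg hWpos.le (hP0pos x).le))
    calc (Fintype.card A : ℝ)^(t-k.2) * (walkProb pr₀ mu₀ t k.1 k.2 *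
          ∏ j ∈ Finset.range k.1, f₀ (extS x j)) *
        (Real.log (walkProb pr₀ mu₀ t k.1 k.2) +
          ∑ j ∈ Finset.range k.1, Real.log (f₀ (extS x j) / f (extS x j)))
        ≤ (∑ y : Fin t → A, jointProb pr₀ mu₀ f₀ g₀ h₀ (extS x) (extS y) t k.1 k.2) *
          Real.log ((∑ y : Fin t → A, jointProb pr₀ mu₀ f₀ g₀ h₀ (extS x) (extS y) t k.1 k.2) /
            (∑ y : Fin t → A, Qprob pr mu f g h (extS x) (extS y) k.1 k.2)) := B5
      _ ≤ ∑ y : Fin t → A, jointProb pr₀ mu₀ f₀ g₀ h₀ (extS x) (extS y) t k.1 k.2 *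
          Real.log (jointProb pr₀ mu₀ f₀ g₀ h₀ (extS x) (extS y) t k.1 k.2 /
            Qprob pr mu f g h (extS x) (extS y) k.1 k.2) := B1
      _ ≤ _ := B2
  -- sum the per-x bounds
  have E1 : ∑ x : Fin t → A, ∏ j ∈ Finset.range k.1, f₀ (extS x j)
      = (Fintype.card A : ℝ)^(t-k.1) := by
    calc ∑ x : Fin t → A, ∏ j ∈ Finset.range k.1, f₀ (extS x j)
        = (Fintype.card A : ℝ)^(t-k.1) * ∑ x : Fin k.1 → A,
            ∏ j ∈ Finset.range k.1, f₀ (extS x j) :=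
          sum_extS_of_le hk1
            (fun X => ∏ j ∈ Finset.range k.1, f₀ (X j))
            (fun X X' hXX =>
              Finset.prod_congr rfl fun j hj => by rw [hXX j (Finset.mem_range.1 hj)])
      _ = _ := by rw [sum_extS_prod f₀ hf₀sum k.1, mul_one]
  have E2 : ∑ x : Fin t → A, (∏ j ∈ Finset.range k.1, f₀ (extS x j)) *
        (∑ j ∈ Finset.range k.1, Real.log (f₀ (extS x j) / f (extS x j)))
      = (Fintype.card A : ℝ)^(t-k.1) *
        ((k.1 : ℝ) * ∑ a, f₀ a * Real.log (f₀ a / f a)) := by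
    calc ∑ x : Fin t → A, (∏ j ∈ Finset.range k.1, f₀ (extS x j)) *
          (∑ j ∈ Finset.range k.1, Real.log (f₀ (extS x j) / f (extS x j)))
        = (Fintype.card A : ℝ)^(t-k.1) * ∑ x : Fin k.1 → A,
            (∏ j ∈ Finset.range k.1, f₀ (extS x j)) *
            (∑ j ∈ Finset.range k.1, Real.log (f₀ (extS x j) / f (extS x j))) :=
          sum_extS_of_le hk1
            (fun X => (∏ j ∈ Finset.range k.1, f₀ (X j)) *
              (∑ j ∈ Finset.range k.1, Real.log (f₀ (X j) / f (X j))))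
            (fun X X' hXX => by
              have e1 : ∀ j ∈ Finset.range k.1, f₀ (X j) = f₀ (X' j) :=
                fun j hj => by rw [hXX j (Finset.mem_range.1 hj)]
              have e2 : ∀ j ∈ Finset.range k.1, Real.log (f₀ (X j) / f (X j))
                  = Real.log (f₀ (X' j) / f (X' j)) :=
                fun j hj => by rw [hXX j (Finset.mem_range.1 hj)]
              rw [Finset.prod_congr rfl e1, Finset.sum_congr rfl e2])
      _ = _ := by rw [sum_extS_klprod f₀ f hf₀sum k.1]
  have hInner : ((Fintype.card A : ℝ)^(t-k.1) * (Fintype.card A : ℝ)^(t-k.2)) *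
      (walkProb pr₀ mu₀ t k.1 k.2 * Real.log (walkProb pr₀ mu₀ t k.1 k.2)
        + (k.1:ℝ) * walkProb pr₀ mu₀ t k.1 k.2 * (∑ a, f₀ a * Real.log (f₀ a / f a)))
      ≤ ∑ x : Fin t → A, ∑ y : Fin t → A,
        jointProb pr₀ mu₀ f₀ g₀ h₀ (extS x) (extS y) t k.1 k.2 *
          (Real.log (Qprob pr₀ mu₀ f₀ g₀ h₀ (extS x) (extS y) k.1 k.2)
            - Real.log (Qprob pr mu f g h (extS x) (extS y) k.1 k.2)) := by
    have hsum := Finset.sum_le_sum (fun x (_ : x ∈ Finset.univ) => step_y x)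
    have hLHS : ∑ x : Fin t → A, (Fintype.card A : ℝ)^(t-k.2) *
        (walkProb pr₀ mu₀ t k.1 k.2 * ∏ j ∈ Finset.range k.1, f₀ (extS x j)) *
        (Real.log (walkProb pr₀ mu₀ t k.1 k.2) +
          ∑ j ∈ Finset.range k.1, Real.log (f₀ (extS x j) / f (extS x j)))
        = ((Fintype.card A : ℝ)^(t-k.1) * (Fintype.card A : ℝ)^(t-k.2)) *
          (walkProb pr₀ mu₀ t k.1 k.2 * Real.log (walkProb pr₀ mu₀ t k.1 k.2)
            + (k.1:ℝ) * walkProb pr₀ mu₀ t k.1 k.2 *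
              (∑ a, f₀ a * Real.log (f₀ a / f a))) := by
      have expand : ∀ x : Fin t → A, (Fintype.card A : ℝ)^(t-k.2) *
          (walkProb pr₀ mu₀ t k.1 k.2 * ∏ j ∈ Finset.range k.1, f₀ (extS x j)) *
          (Real.log (walkProb pr₀ mu₀ t k.1 k.2) +
            ∑ j ∈ Finset.range k.1, Real.log (f₀ (extS x j) / f (extS x j)))
          = ((Fintype.card A : ℝ)^(t-k.2) * walkProb pr₀ mu₀ t k.1 k.2 *
              Real.log (walkProb pr₀ mu₀ t k.1 k.2)) *
              (∏ j ∈ Finset.range k.1, f₀ (extS x j))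
            + ((Fintype.card A : ℝ)^(t-k.2) * walkProb pr₀ mu₀ t k.1 k.2) *
              ((∏ j ∈ Finset.range k.1, f₀ (extS x j)) *
                (∑ j ∈ Finset.range k.1, Real.log (f₀ (extS x j) / f (extS x j)))) :=
        fun x => by ring
      rw [Finset.sum_congr rfl fun x _ => expand x, Finset.sum_add_distrib,
        ← Finset.mul_sum, ← Finset.mul_sum, E1, E2]
      ring
    rw [← hLHS]
    exact hsum
  have hc2pos : (0:ℝ) < (Fintype.card A : ℝ)^(t-k.1) * (Fintype.card A : ℝ)^(t-k.2) := by
    positivity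
  have hfinal := mul_le_mul_of_nonneg_left hInner (inv_nonneg.2 hc2pos.le)
  rw [inv_mul_cancel_left₀ hc2pos.ne'] at hfinal
  exact hfinal


lemma sigma_to_fibers (pr' : E → E → ℝ) (mu' : E → ℝ) (f' g' : A → ℝ) (h' : A → A → ℝ)
    (Φ : ℕ → ℕ → (ℕ → A) → (ℕ → A) → ℝ)
    (hΦ : ∀ (n m : ℕ) (X X' Y Y' : ℕ → A), (∀ j < n, X j = X' j) → (∀ j < m, Y j = Y' j) →
      Φ n m X Y = Φ n m X' Y') (t : ℕ) :
    ∑ c : PClass A t,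
      (pathProb pr' mu' c.1 * emit f' g' h' (extS c.2.1) (extS c.2.2) (extPath c.1) 0 t) *
        Φ (Nn (extPath c.1) t) (Mm (extPath c.1) t) (extS c.2.1) (extS c.2.2)
    = ∑ k ∈ Finset.range (t+1) ×ˢ Finset.range (t+1),
        ((Fintype.card A : ℝ)^(t-k.1) * (Fintype.card A : ℝ)^(t-k.2))⁻¹ *
        ∑ x : Fin t → A, ∑ y : Fin t → A,
          jointProb pr' mu' f' g' h' (extS x) (extS y) t k.1 k.2 *
            Φ k.1 k.2 (extS x) (extS y) := by
  classical
  have hcApos : (0:ℝ) < (Fintype.card A : ℝ) := by exact_mod_cast Fintype.card_pos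
  rw [← Finset.univ_sigma_univ, Finset.sum_sigma]
  have huconv : ∀ u : Fin t → E,
      ∑ p : (Fin (Nn (extPath u) t) → A) × (Fin (Mm (extPath u) t) → A),
        (pathProb pr' mu' u * emit f' g' h' (extS p.1) (extS p.2) (extPath u) 0 t) *
          Φ (Nn (extPath u) t) (Mm (extPath u) t) (extS p.1) (extS p.2)
      = ∑ k ∈ Finset.range (t+1) ×ˢ Finset.range (t+1),
          (if (Nn (extPath u) t, Mm (extPath u) t) = k then
            ((Fintype.card A : ℝ)^(t-k.1) * (Fintype.card A : ℝ)^(t-k.2))⁻¹ *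
            ∑ x : Fin t → A, ∑ y : Fin t → A,
              (pathProb pr' mu' u * emit f' g' h' (extS x) (extS y) (extPath u) 0 t) *
                Φ k.1 k.2 (extS x) (extS y)
          else 0) := by
    intro u
    rw [Finset.sum_ite_eq (Finset.range (t+1) ×ˢ Finset.range (t+1))
      (Nn (extPath u) t, Mm (extPath u) t) _]
    rw [if_pos (Finset.mem_product.2 ⟨Finset.mem_range.2 (Nat.lt_succ_of_le (Nn_le _ _)),
      Finset.mem_range.2 (Nat.lt_succ_of_le (Mm_le _ _))⟩)]
    dsimp only
    rw [Fintype.sum_prod_type]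
    -- now convert the dependent double sum to the full-length double sum
    have hy : ∀ x : Fin (Nn (extPath u) t) → A,
        ∑ y : Fin t → A,
          (pathProb pr' mu' u * emit f' g' h' (extS x) (extS y) (extPath u) 0 t) *
            Φ (Nn (extPath u) t) (Mm (extPath u) t) (extS x) (extS y)
        = (Fintype.card A : ℝ)^(t - Mm (extPath u) t) *
          ∑ y : Fin (Mm (extPath u) t) → A,
            (pathProb pr' mu' u * emit f' g' h' (extS x) (extS y) (extPath u) 0 t) *
              Φ (Nn (extPath u) t) (Mm (extPath u) t) (extS x) (extS y) :=
      fun x => sum_extS_of_le (Mm_le (extPath u) t)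
        (fun Y => (pathProb pr' mu' u * emit f' g' h' (extS x) Y (extPath u) 0 t) *
          Φ (Nn (extPath u) t) (Mm (extPath u) t) (extS x) Y)
        (fun Y Y' hYY => by
          rw [emit_congr f' g' h' (fun _ _ => rfl) (fun j _ => rfl) hYY,
            hΦ _ _ (extS x) (extS x) Y Y' (fun j _ => rfl) hYY])
    have hx : ∑ x : Fin t → A,
        ∑ y : Fin (Mm (extPath u) t) → A,
          (pathProb pr' mu' u * emit f' g' h' (extS x) (extS y) (extPath u) 0 t) *
            Φ (Nn (extPath u) t) (Mm (extPath u) t) (extS x) (extS y)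
        = (Fintype.card A : ℝ)^(t - Nn (extPath u) t) *
          ∑ x : Fin (Nn (extPath u) t) → A,
          ∑ y : Fin (Mm (extPath u) t) → A,
            (pathProb pr' mu' u * emit f' g' h' (extS x) (extS y) (extPath u) 0 t) *
              Φ (Nn (extPath u) t) (Mm (extPath u) t) (extS x) (extS y) :=
      sum_extS_of_le (Nn_le (extPath u) t)
        (fun X => ∑ y : Fin (Mm (extPath u) t) → A,
          (pathProb pr' mu' u * emit f' g' h' X (extS y) (extPath u) 0 t) *
            Φ (Nn (extPath u) t) (Mm (extPath u) t) X (extS y))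
        (fun X X' hXX => by
          refine Finset.sum_congr rfl fun y _ => ?_
          rw [emit_congr f' g' h' (fun _ _ => rfl) hXX (fun j _ => rfl),
            hΦ _ _ X X' (extS y) (extS y) hXX (fun j _ => rfl)])
    have hfull : ∑ x : Fin t → A, ∑ y : Fin t → A,
        (pathProb pr' mu' u * emit f' g' h' (extS x) (extS y) (extPath u) 0 t) *
          Φ (Nn (extPath u) t) (Mm (extPath u) t) (extS x) (extS y)
        = (Fintype.card A : ℝ)^(t - Nn (extPath u) t) *
          ((Fintype.card A : ℝ)^(t - Mm (extPath u) t) *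
          (∑ x : Fin (Nn (extPath u) t) → A, ∑ y : Fin (Mm (extPath u) t) → A,
            (pathProb pr' mu' u * emit f' g' h' (extS x) (extS y) (extPath u) 0 t) *
              Φ (Nn (extPath u) t) (Mm (extPath u) t) (extS x) (extS y))) := by
      calc ∑ x : Fin t → A, ∑ y : Fin t → A,
          (pathProb pr' mu' u * emit f' g' h' (extS x) (extS y) (extPath u) 0 t) *
            Φ (Nn (extPath u) t) (Mm (extPath u) t) (extS x) (extS y)
          = ∑ x : Fin t → A, (Fintype.card A : ℝ)^(t - Mm (extPath u) t) *
            ∑ y : Fin (Mm (extPath u) t) → A,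
              (pathProb pr' mu' u * emit f' g' h' (extS x) (extS y) (extPath u) 0 t) *
                Φ (Nn (extPath u) t) (Mm (extPath u) t) (extS x) (extS y) := by
            refine Finset.sum_congr rfl fun x _ => ?_
            exact sum_extS_of_le (Mm_le (extPath u) t)
              (fun Y => (pathProb pr' mu' u * emit f' g' h' (extS x) Y (extPath u) 0 t) *
                Φ (Nn (extPath u) t) (Mm (extPath u) t) (extS x) Y)
              (fun Y Y' hYY => by
                rw [emit_congr f' g' h' (fun _ _ => rfl) (fun j _ => rfl) hYY,
                  hΦ _ _ (extS x) (extS x) Y Y' (fun j _ => rfl) hYY])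
        _ = (Fintype.card A : ℝ)^(t - Mm (extPath u) t) * ∑ x : Fin t → A,
            ∑ y : Fin (Mm (extPath u) t) → A,
              (pathProb pr' mu' u * emit f' g' h' (extS x) (extS y) (extPath u) 0 t) *
                Φ (Nn (extPath u) t) (Mm (extPath u) t) (extS x) (extS y) := by
            rw [Finset.mul_sum]
        _ = _ := by rw [hx]; ring
    rw [hfull]
    rw [inv_mul_eq_div, eq_div_iff (by positivity)]
    ring
  rw [Finset.sum_congr rfl fun u _ => huconv u, Finset.sum_comm]
  refine Finset.sum_congr rfl fun k hk => ?_
  have e1 : ∀ u : Fin t → E,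
      (if (Nn (extPath u) t, Mm (extPath u) t) = k then
        ((Fintype.card A : ℝ)^(t-k.1) * (Fintype.card A : ℝ)^(t-k.2))⁻¹ *
        ∑ x : Fin t → A, ∑ y : Fin t → A,
          (pathProb pr' mu' u * emit f' g' h' (extS x) (extS y) (extPath u) 0 t) *
            Φ k.1 k.2 (extS x) (extS y)
      else 0)
      = ((Fintype.card A : ℝ)^(t-k.1) * (Fintype.card A : ℝ)^(t-k.2))⁻¹ *
        ∑ x : Fin t → A, ∑ y : Fin t → A,
          (if (Nn (extPath u) t, Mm (extPath u) t) = k then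
            pathProb pr' mu' u * emit f' g' h' (extS x) (extS y) (extPath u) 0 t else 0) *
            Φ k.1 k.2 (extS x) (extS y) := by
    intro u
    by_cases hc : (Nn (extPath u) t, Mm (extPath u) t) = k
    · rw [if_pos hc]
      exact congrArg _ (Finset.sum_congr rfl fun x _ => Finset.sum_congr rfl fun y _ => by
        rw [if_pos hc])
    · rw [if_neg hc]
      symm
      rw [Finset.sum_congr rfl fun x (_ : x ∈ Finset.univ) => Finset.sum_congr rfl
        fun y (_ : y ∈ Finset.univ) => by rw [if_neg hc, zero_mul]]
      simp
  rw [Finset.sum_congr rfl fun u _ => e1 u, ← Finset.mul_sum]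
  congr 1
  rw [Finset.sum_comm]
  refine Finset.sum_congr rfl fun x _ => ?_
  rw [Finset.sum_comm]
  refine Finset.sum_congr rfl fun y _ => ?_
  rw [← Finset.sum_mul, jointProb_key]

lemma core_bound
    (pr₀ : E → E → ℝ) (mu₀ : E → ℝ) (f₀ g₀ : A → ℝ) (h₀ : A → A → ℝ)
    (hpr₀ : ∀ e e', 0 < pr₀ e e') (hmu₀ : ∀ e, 0 < mu₀ e)
    (hf₀ : ∀ a, 0 < f₀ a) (hg₀ : ∀ a, 0 < g₀ a) (hh₀ : ∀ a b, 0 < h₀ a b)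
    (hpr₀sum : ∀ e, ∑ e', pr₀ e e' = 1) (hmu₀sum : ∑ e, mu₀ e = 1)
    (hstat₀ : ∀ e', ∑ e, mu₀ e * pr₀ e e' = mu₀ e')
    (hg₀sum : ∑ a, g₀ a = 1) (hf₀sum : ∑ a, f₀ a = 1)
    (hmarg₀X : ∀ a, ∑ b, h₀ a b = f₀ a)
    (pr : E → E → ℝ) (mu : E → ℝ) (f g : A → ℝ) (h : A → A → ℝ)
    (hpr : ∀ e e', 0 < pr e e') (hmu : ∀ e, 0 < mu e)
    (hf : ∀ a, 0 < f a) (hg : ∀ a, 0 < g a) (hh : ∀ a b, 0 < h a b)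
    (hprsum : ∀ e, ∑ e', pr e e' = 1) (hmusum : ∑ e, mu e = 1)
    (hgsum : ∑ a, g a = 1) (hmargX : ∀ a, ∑ b, h a b = f a)
    (t : ℕ) (ht : 1 ≤ t) :
    (t:ℝ) * (mu₀ 0 + mu₀ 2) * (∑ a, f₀ a * Real.log (f₀ a / f a))
      - Real.log ((t+1) * (t+1) : ℕ)
    ≤ ∑ c : PClass A t,
        (pathProb pr₀ mu₀ c.1 * emit f₀ g₀ h₀ (extS c.2.1) (extS c.2.2) (extPath c.1) 0 t) *
        (Real.log (Qprob pr₀ mu₀ f₀ g₀ h₀ (extS c.2.1) (extS c.2.2)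
            (Nn (extPath c.1) t) (Mm (extPath c.1) t))
          - Real.log (Qprob pr mu f g h (extS c.2.1) (extS c.2.2)
            (Nn (extPath c.1) t) (Mm (extPath c.1) t))) := by
  classical
  set K := Finset.range (t+1) ×ˢ Finset.range (t+1) with hK
  -- rewrite the sigma sum as fiber sums
  have hregroup := sigma_to_fibers pr₀ mu₀ f₀ g₀ h₀
    (fun n m X Y => Real.log (Qprob pr₀ mu₀ f₀ g₀ h₀ X Y n m)
      - Real.log (Qprob pr mu f g h X Y n m))
    (fun n m X X' Y Y' hX hY => by
      rw [Qprob_congr pr₀ mu₀ f₀ g₀ h₀ n m hX hY, Qprob_congr pr mu f g h n m hX hY]) t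
  rw [hregroup]
  -- lower estimate each fiber
  have hfiber : ∀ k ∈ K,
      walkProb pr₀ mu₀ t k.1 k.2 * Real.log (walkProb pr₀ mu₀ t k.1 k.2)
        + (k.1:ℝ) * walkProb pr₀ mu₀ t k.1 k.2 * (∑ a, f₀ a * Real.log (f₀ a / f a))
      ≤ ((Fintype.card A : ℝ)^(t-k.1) * (Fintype.card A : ℝ)^(t-k.2))⁻¹ *
        ∑ x : Fin t → A, ∑ y : Fin t → A,
          jointProb pr₀ mu₀ f₀ g₀ h₀ (extS x) (extS y) t k.1 k.2 *
            ((fun n m X Y => Real.log (Qprob pr₀ mu₀ f₀ g₀ h₀ X Y n m)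
              - Real.log (Qprob pr mu f g h X Y n m)) k.1 k.2 (extS x) (extS y)) := by
    intro k hk
    obtain ⟨hk1, hk2⟩ := Finset.mem_product.1 hk
    exact fiber_bound pr₀ mu₀ f₀ g₀ h₀ hpr₀ hmu₀ hf₀ hg₀ hh₀ hg₀sum hf₀sum hmarg₀X
      pr mu f g h hpr hmu hf hg hh hprsum hmusum hgsum hmargX t ht k
      (Nat.lt_succ_iff.1 (Finset.mem_range.1 hk1))
      (Nat.lt_succ_iff.1 (Finset.mem_range.1 hk2))
  have hsumfibers := Finset.sum_le_sum hfiber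
  -- identify the fiber statistics
  have hWsum : ∑ k ∈ K, walkProb pr₀ mu₀ t k.1 k.2 = 1 := by
    rw [Finset.sum_congr rfl fun k (_ : k ∈ K) => (walkProb_key pr₀ mu₀ t k).symm,
      sum_key_collapse t (fun u _ => pathProb pr₀ mu₀ u)]
    exact sum_pathProb_one pr₀ mu₀ hpr₀sum hmu₀sum ht
  have hWnonneg : ∀ k ∈ K, 0 ≤ walkProb pr₀ mu₀ t k.1 k.2 := fun k _ =>
    walkProb_nonneg pr₀ mu₀ (fun e e' => (hpr₀ e e').le) (fun e => (hmu₀ e).le) t k.1 k.2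
  have hKcard : (K.card : ℝ) = ((t+1) * (t+1) : ℕ) := by
    rw [hK, Finset.card_product, Finset.card_range]
  have hentropy : -Real.log ((t+1) * (t+1) : ℕ)
      ≤ ∑ k ∈ K, walkProb pr₀ mu₀ t k.1 k.2 * Real.log (walkProb pr₀ mu₀ t k.1 k.2) := by
    have := entropy_lower K ⟨(0,0), by
      rw [hK]; exact Finset.mem_product.2 ⟨Finset.mem_range.2 (Nat.succ_pos t),
        Finset.mem_range.2 (Nat.succ_pos t)⟩⟩
      (fun k => walkProb pr₀ mu₀ t k.1 k.2) hWnonneg hWsum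
    rw [hKcard] at this
    exact this
  have hexpN : ∑ k ∈ K, (k.1:ℝ) * walkProb pr₀ mu₀ t k.1 k.2
      = (t:ℝ) * (mu₀ 0 + mu₀ 2) := by
    have e1 : ∀ k ∈ K, (k.1:ℝ) * walkProb pr₀ mu₀ t k.1 k.2
        = ∑ u : Fin t → E, (if (Nn (extPath u) t, Mm (extPath u) t) = k then
            (k.1:ℝ) * pathProb pr₀ mu₀ u else 0) := by
      intro k _
      rw [← walkProb_key pr₀ mu₀ t k, Finset.mul_sum]
      exact Finset.sum_congr rfl fun u _ => by
        by_cases hc : (Nn (extPath u) t, Mm (extPath u) t) = k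
        · rw [if_pos hc, if_pos hc]
        · rw [if_neg hc, if_neg hc, mul_zero]
    rw [Finset.sum_congr rfl e1,
      sum_key_collapse t (fun u k => (k.1:ℝ) * pathProb pr₀ mu₀ u)]
    have e2 : ∀ u : Fin t → E,
        (((Nn (extPath u) t, Mm (extPath u) t) : ℕ × ℕ).1 : ℝ) * pathProb pr₀ mu₀ u
        = pathProb pr₀ mu₀ u * (Nn (extPath u) t : ℝ) := fun u => mul_comm _ _
    rw [Finset.sum_congr rfl fun u _ => e2 u]
    exact expected_Nn pr₀ mu₀ hpr₀sum hstat₀ t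
  -- combine
  have hsplit : ∑ k ∈ K, (walkProb pr₀ mu₀ t k.1 k.2 * Real.log (walkProb pr₀ mu₀ t k.1 k.2)
        + (k.1:ℝ) * walkProb pr₀ mu₀ t k.1 k.2 * (∑ a, f₀ a * Real.log (f₀ a / f a)))
      = (∑ k ∈ K, walkProb pr₀ mu₀ t k.1 k.2 * Real.log (walkProb pr₀ mu₀ t k.1 k.2))
        + (∑ k ∈ K, (k.1:ℝ) * walkProb pr₀ mu₀ t k.1 k.2) *
          (∑ a, f₀ a * Real.log (f₀ a / f a)) := by
    rw [Finset.sum_add_distrib, Finset.sum_mul]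
  rw [hsplit, hexpN] at hsumfibers
  calc (t:ℝ) * (mu₀ 0 + mu₀ 2) * (∑ a, f₀ a * Real.log (f₀ a / f a))
        - Real.log ((t+1) * (t+1) : ℕ)
      ≤ (∑ k ∈ K, walkProb pr₀ mu₀ t k.1 k.2 * Real.log (walkProb pr₀ mu₀ t k.1 k.2))
        + (t:ℝ) * (mu₀ 0 + mu₀ 2) * (∑ a, f₀ a * Real.log (f₀ a / f a)) := by
        linarith [hentropy]
    _ ≤ _ := hsumfibers

end CoreBound


end AuxHMM

/-- **divergence property on `Θ_marg`.** With `ℙ` the law of the pair-HMM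
under `θ₀ ∈ Θ_0`, suppose both `θ₀` and `θ` satisfy the marginal conditions `h_X = f`
and `h_Y = g` (Assumption 3), and `f ≠ f₀`.  Let `p = mu₀(V)` be the stationary
probability of a vertical step under `θ₀` (so that `t⁻¹ N_t → 1 − p` a.s.).  Then
`D(θ|θ₀) = w(θ₀) − w(θ) ≥ −((1−p)/2) Σ_x f₀(x) log(f(x)/f₀(x)) > 0`.
(The symmetric statement holds for `g ≠ g₀`.) -/
theorem D_positive_on_Theta_marg {A : Type} [Fintype A] [Nonempty A]
    [MeasurableSpace A] [MeasurableSingletonClass A]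
    (ℙ : Measure ((ℕ → E) × (ℕ → A) × (ℕ → A))) [IsProbabilityMeasure ℙ]
    -- the true parameter θ₀ ∈ Θ_0 :
    (pr₀ : E → E → ℝ) (mu₀ : E → ℝ) (f₀ g₀ : A → ℝ) (h₀ : A → A → ℝ)
    (hpr₀ : ∀ e e', 0 < pr₀ e e') (hmu₀ : ∀ e, 0 < mu₀ e)
    (hf₀ : ∀ a, 0 < f₀ a) (hg₀ : ∀ a, 0 < g₀ a) (hh₀ : ∀ a b, 0 < h₀ a b)
    (hpr₀sum : ∀ e, ∑ e', pr₀ e e' = 1) (hmu₀sum : ∑ e, mu₀ e = 1)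
    (hf₀sum : ∑ a, f₀ a = 1) (hg₀sum : ∑ a, g₀ a = 1) (hh₀sum : ∑ a, ∑ b, h₀ a b = 1)
    (hstat₀ : ∀ e', ∑ e, mu₀ e * pr₀ e e' = mu₀ e')
    (hLaw : ∀ t : ℕ, 1 ≤ t → ∀ (u : Fin t → E) (x y : ℕ → A),
      (ℙ {ω : (ℕ → E) × (ℕ → A) × (ℕ → A) |
          (∀ i, ∀ hi : i < t, ω.1 i = u ⟨i, hi⟩) ∧
          (∀ i < Nn (extPath u) t, ω.2.1 i = x i) ∧
          (∀ j < Mm (extPath u) t, ω.2.2 j = y j)}).toReal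
        = pathProb pr₀ mu₀ u * emit f₀ g₀ h₀ x y (extPath u) 0 t)
    -- another parameter θ ∈ Θ_0 :
    (pr : E → E → ℝ) (mu : E → ℝ) (f g : A → ℝ) (h : A → A → ℝ)
    (hpr : ∀ e e', 0 < pr e e') (hmu : ∀ e, 0 < mu e)
    (hf : ∀ a, 0 < f a) (hg : ∀ a, 0 < g a) (hh : ∀ a b, 0 < h a b)
    (hprsum : ∀ e, ∑ e', pr e e' = 1) (hmusum : ∑ e, mu e = 1)
    (hfsum : ∑ a, f a = 1) (hgsum : ∑ a, g a = 1) (hhsum : ∑ a, ∑ b, h a b = 1)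
    (hstat : ∀ e', ∑ e, mu e * pr e e' = mu e')
    -- Assumption 3 for both parameters :
    (hmarg₀X : ∀ a, ∑ b, h₀ a b = f₀ a) (hmarg₀Y : ∀ b, ∑ a, h₀ a b = g₀ b)
    (hmargX : ∀ a, ∑ b, h a b = f a) (hmargY : ∀ b, ∑ a, h a b = g b)
    (hne : f ≠ f₀)
    (W₀ W : ℝ)
    (hW₀ : Filter.Tendsto
      (fun t : ℕ => (∫ ω, Real.log (Qprob pr₀ mu₀ f₀ g₀ h₀ ω.2.1 ω.2.2
        (Nn ω.1 t) (Mm ω.1 t)) ∂ℙ) / t) Filter.atTop (nhds W₀))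
    (hW : Filter.Tendsto
      (fun t : ℕ => (∫ ω, Real.log (Qprob pr mu f g h ω.2.1 ω.2.2
        (Nn ω.1 t) (Mm ω.1 t)) ∂ℙ) / t) Filter.atTop (nhds W)) :
    -((1 - mu₀ 1) / 2) * ∑ a, f₀ a * Real.log (f a / f₀ a) ≤ W₀ - W ∧
    0 < -((1 - mu₀ 1) / 2) * ∑ a, f₀ a * Real.log (f a / f₀ a) := by
  classical
  -- basic facts about the two densities
  have hS : (∑ a, f₀ a * Real.log (f a / f₀ a))
      = -∑ a, f₀ a * Real.log (f₀ a / f a) := by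
    rw [← Finset.sum_neg_distrib]
    refine Finset.sum_congr rfl fun a _ => ?_
    rw [Real.log_div (hf a).ne' (hf₀ a).ne', Real.log_div (hf₀ a).ne' (hf a).ne']
    ring
  have hSneg : (∑ a, f₀ a * Real.log (f a / f₀ a)) < 0 :=
    gibbs_strict f₀ f hf₀ hf hf₀sum hfsum hne
  have hKLpos : 0 < ∑ a, f₀ a * Real.log (f₀ a / f a) := by
    rw [hS] at hSneg; linarith
  have hmu3 : mu₀ 0 + mu₀ 1 + mu₀ 2 = 1 := by
    have := hmu₀sum
    rwa [Fin.sum_univ_three] at this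
  have hp1 : mu₀ 1 < 1 := by
    have h0 := hmu₀ 0; have h2 := hmu₀ 2; linarith
  have hmu02 : mu₀ 0 + mu₀ 2 = 1 - mu₀ 1 := by linarith
  -- identify the integral difference with the combinatorial sum
  have hIdent : ∀ t : ℕ, 1 ≤ t →
      (∫ ω, Real.log (Qprob pr₀ mu₀ f₀ g₀ h₀ ω.2.1 ω.2.2 (Nn ω.1 t) (Mm ω.1 t)) ∂ℙ)
        - (∫ ω, Real.log (Qprob pr mu f g h ω.2.1 ω.2.2 (Nn ω.1 t) (Mm ω.1 t)) ∂ℙ)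
      = ∑ c : PClass A t,
        (pathProb pr₀ mu₀ c.1 * emit f₀ g₀ h₀ (extS c.2.1) (extS c.2.2) (extPath c.1) 0 t) *
        (Real.log (Qprob pr₀ mu₀ f₀ g₀ h₀ (extS c.2.1) (extS c.2.2)
            (Nn (extPath c.1) t) (Mm (extPath c.1) t))
          - Real.log (Qprob pr mu f g h (extS c.2.1) (extS c.2.2)
            (Nn (extPath c.1) t) (Mm (extPath c.1) t))) := by
    intro t ht
    rw [integral_log_Q ℙ pr₀ mu₀ f₀ g₀ h₀ t, integral_log_Q ℙ pr mu f g h t,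
      ← Finset.sum_sub_distrib]
    refine Finset.sum_congr rfl fun c _ => ?_
    have hPc : (ℙ (cSet t c)).toReal
        = pathProb pr₀ mu₀ c.1 *
          emit f₀ g₀ h₀ (extS c.2.1) (extS c.2.2) (extPath c.1) 0 t :=
      hLaw t ht c.1 (extS c.2.1) (extS c.2.2)
    rw [hPc, ← mul_sub]
  -- the per-t lower bound
  have hbound : ∀ t : ℕ, 1 ≤ t →
      ((1 - mu₀ 1) * ∑ a, f₀ a * Real.log (f₀ a / f a))
        - Real.log (((t:ℝ)+1) * ((t:ℝ)+1)) / t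
      ≤ (∫ ω, Real.log (Qprob pr₀ mu₀ f₀ g₀ h₀ ω.2.1 ω.2.2 (Nn ω.1 t) (Mm ω.1 t)) ∂ℙ) / t
        - (∫ ω, Real.log (Qprob pr mu f g h ω.2.1 ω.2.2 (Nn ω.1 t) (Mm ω.1 t)) ∂ℙ) / t := by
    intro t ht
    have htR : (0:ℝ) < t := by exact_mod_cast ht
    have hcore := core_bound pr₀ mu₀ f₀ g₀ h₀ hpr₀ hmu₀ hf₀ hg₀ hh₀ hpr₀sum hmu₀sum hstat₀
      hg₀sum hf₀sum hmarg₀X pr mu f g h hpr hmu hf hg hh hprsum hmusum hgsum hmargX t ht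
    rw [← hIdent t ht] at hcore
    have hcast : Real.log ((t+1) * (t+1) : ℕ) = Real.log (((t:ℝ)+1) * ((t:ℝ)+1)) :=
      congrArg Real.log (by push_cast; ring)
    rw [hcast, hmu02] at hcore
    have h2 := (div_le_div_iff_of_pos_right htR).2 hcore
    rw [sub_div, mul_assoc, mul_div_cancel_left₀ _ htR.ne'] at h2
    rw [← sub_div]
    exact h2
  -- limit of the error term
  have htend0 : Filter.Tendsto (fun t : ℕ => Real.log (((t:ℝ)+1) * ((t:ℝ)+1)) / t)
      Filter.atTop (nhds 0) := by
    have h1 : Filter.Tendsto (fun t : ℕ => ((t:ℝ)+1)) Filter.atTop Filter.atTop :=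
      Filter.tendsto_atTop_add_const_right _ 1 tendsto_natCast_atTop_atTop
    have h2 : Filter.Tendsto (fun t : ℕ => Real.log ((t:ℝ)+1) / ((t:ℝ)+1))
        Filter.atTop (nhds 0) :=
      (Real.isLittleO_log_id_atTop.tendsto_div_nhds_zero).comp h1
    have h3 : Filter.Tendsto (fun t : ℕ => 4 * (Real.log ((t:ℝ)+1) / ((t:ℝ)+1)))
        Filter.atTop (nhds 0) := by
      have h4 := h2.const_mul (4:ℝ)
      rwa [mul_zero] at h4
    refine squeeze_zero' ?_ ?_ h3
    · filter_upwards [Filter.eventually_ge_atTop 1] with t ht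
      have htR : (1:ℝ) ≤ (t:ℝ) := by exact_mod_cast ht
      have hge : (1:ℝ) ≤ ((t:ℝ)+1) * ((t:ℝ)+1) := by nlinarith
      exact div_nonneg (Real.log_nonneg hge) (by linarith)
    · filter_upwards [Filter.eventually_ge_atTop 1] with t ht
      have htR : (1:ℝ) ≤ (t:ℝ) := by exact_mod_cast ht
      have hx1 : (1:ℝ) ≤ (t:ℝ)+1 := by linarith
      have hlog : Real.log (((t:ℝ)+1) * ((t:ℝ)+1)) = 2 * Real.log ((t:ℝ)+1) := by
        rw [Real.log_mul (by linarith) (by linarith)]; ring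
      have hlognn : 0 ≤ Real.log ((t:ℝ)+1) := Real.log_nonneg hx1
      rw [hlog, show 4 * (Real.log ((t:ℝ)+1) / ((t:ℝ)+1))
        = (4 * Real.log ((t:ℝ)+1)) / ((t:ℝ)+1) from by ring,
        div_le_div_iff₀ (by linarith) (by linarith)]
      nlinarith
  have hC : Filter.Tendsto (fun t : ℕ =>
      ((1 - mu₀ 1) * ∑ a, f₀ a * Real.log (f₀ a / f a))
        - Real.log (((t:ℝ)+1) * ((t:ℝ)+1)) / t) Filter.atTop
      (nhds ((1 - mu₀ 1) * ∑ a, f₀ a * Real.log (f₀ a / f a))) := by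
    have h5 := (tendsto_const_nhds (x := (1 - mu₀ 1) * ∑ a, f₀ a * Real.log (f₀ a / f a))
      (f := Filter.atTop (α := ℕ))).sub htend0
    rwa [sub_zero] at h5
  have hlim : ((1 - mu₀ 1) * ∑ a, f₀ a * Real.log (f₀ a / f a)) ≤ W₀ - W := by
    refine le_of_tendsto_of_tendsto hC (hW₀.sub hW) ?_
    filter_upwards [Filter.eventually_ge_atTop 1] with t ht
    exact hbound t ht
  have h1mu : 0 < 1 - mu₀ 1 := by linarith
  constructor
  · rw [hS]
    calc -((1 - mu₀ 1) / 2) * -(∑ a, f₀ a * Real.log (f₀ a / f a))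
        = ((1 - mu₀ 1)/2) * (∑ a, f₀ a * Real.log (f₀ a / f a)) := by ring
      _ ≤ (1 - mu₀ 1) * ∑ a, f₀ a * Real.log (f₀ a / f a) := by nlinarith
      _ ≤ W₀ - W := hlim
  · rw [hS, show -((1 - mu₀ 1) / 2) * -(∑ a, f₀ a * Real.log (f₀ a / f a))
      = ((1 - mu₀ 1)/2) * (∑ a, f₀ a * Real.log (f₀ a / f a)) from by ring]
    exact mul_pos (by linarith) hKLpos
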